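/- arXiv:2002.10014 — 4 statements merged into one kernel-verified Lean document; each statement's English description precedes it below -/
import Mathlib

section
/- Let n ≥ 2 and let G be a balanced bipartite graph on 2n vertices with color classes R (red) and B (blue), each of size n. If every red vertex has degree greater than n/2 and every blue vertex has degree at least n/2, then G contains a Hamiltonian cycle. -/
open SimpleGraph Sum


/-- A "numeric" Hamiltonian cycle description: `g 0, g 1, ..., g (N-1), g 0`. -/
def IsHC {α : Type*} (N : ℕ) (G : SimpleGraph α) (g : ℕ → α) : Prop :=
  (∀ m₁ < N, ∀ m₂ < N, g m₁ = g m₂ → m₁ = m₂) ∧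
  (∀ v, ∃ m < N, g m = v) ∧
  (∀ m, m + 1 < N → G.Adj (g m) (g (m + 1))) ∧
  G.Adj (g (N - 1)) (g 0)

/-- Integer-indexed periodic Hamiltonian cycle description. -/
def GoodZ {α : Type*} (N : ℕ) (G : SimpleGraph α) (f : ℤ → α) : Prop :=
  (∀ k : ℤ, f (k + N) = f k) ∧
  (∀ k k' : ℤ, f k = f k' → (N : ℤ) ∣ (k - k')) ∧
  (∀ v, ∃ k : ℤ, f k = v) ∧
  (∀ k : ℤ, G.Adj (f k) (f (k + 1)))

lemma int_dvd_small {N m : ℤ} (hN : 0 < N) (h : N ∣ m) (h0 : 0 ≤ m) (h1 : m < N) : m = 0 := by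
  rcases h with ⟨c, rfl⟩
  rcases lt_trichotomy c 0 with hc | hc | hc
  · nlinarith
  · simp [hc]
  · nlinarith

lemma GoodZ.eq_of_dvd {α : Type*} {N : ℕ} {G : SimpleGraph α} {f : ℤ → α}
    (hf : GoodZ N G f) {k k' : ℤ} (h : (N : ℤ) ∣ (k - k')) : f k = f k' := by
  obtain ⟨c, hc⟩ := h
  have key : ∀ t : ℕ, ∀ k : ℤ, f (k + N * t) = f k := by
    intro t
    induction t with
    | zero => simp
    | succ t ih =>
      intro k
      have h1 := hf.1 (k + N * t)
      have h2 := ih k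
      have : (k + (N:ℤ) * ((t:ℕ) + 1 : ℕ)) = (k + N * t) + N := by push_cast; ring
      rw [this, h1, h2]
  rcases le_or_gt 0 c with hc0 | hc0
  · obtain ⟨t, rfl⟩ := Int.eq_ofNat_of_zero_le hc0
    have hk : k = k' + (N:ℤ) * t := by linarith
    rw [hk]; exact key t k'
  · obtain ⟨t, ht⟩ := Int.eq_ofNat_of_zero_le (neg_nonneg.mpr hc0.le)
    have hc' : c = -(t:ℤ) := by omega
    rw [hc'] at hc
    have hring : (N:ℤ) * -(t:ℤ) = -((N:ℤ) * t) := by ring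
    have hk : k' = k + (N:ℤ) * t := by linarith
    rw [hk]; exact (key t k).symm

lemma IsHC.toGoodZ {α : Type*} {N : ℕ} {G : SimpleGraph α} {g : ℕ → α}
    (hN : 2 ≤ N) (h : IsHC N G g) : GoodZ N G (fun k => g (k % (N : ℤ)).toNat) := by
  have hNZ : (0:ℤ) < N := by exact_mod_cast (by omega : 0 < N)
  have hmem : ∀ k : ℤ, 0 ≤ k % N ∧ k % N < N :=
    fun k => ⟨Int.emod_nonneg k (by omega), Int.emod_lt_of_pos k hNZ⟩
  refine ⟨?_, ?_, ?_, ?_⟩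
  · intro k; simp [Int.add_mul_emod_self_left]
  · intro k k' hkk
    have h1 := hmem k; have h2 := hmem k'
    have heq : (k % N).toNat = (k' % N).toNat :=
      h.1 _ (by omega) _ (by omega) hkk
    have heq2 : k % (N:ℤ) = k' % N := by omega
    have : (k - k') % (N:ℤ) = 0 := by
      rw [Int.sub_emod, heq2]; simp
    exact Int.dvd_of_emod_eq_zero this
  · intro v
    obtain ⟨m, hm, hgm⟩ := h.2.1 v
    refine ⟨(m : ℤ), ?_⟩
    show g (((m:ℤ) % N).toNat) = v
    rw [Int.emod_eq_of_lt (by positivity) (by exact_mod_cast hm)]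
    simpa using hgm
  · intro k
    have h1 := hmem k
    have h1N : (1:ℤ) % N = 1 := Int.emod_eq_of_lt (by omega) (by exact_mod_cast hN)
    have hstep : (k + 1) % (N:ℤ) = (k % N + 1) % N := by
      rw [Int.add_emod k 1 N, h1N]
    show G.Adj (g ((k % N).toNat)) (g (((k+1) % N).toNat))
    rcases lt_or_ge (k % (N:ℤ) + 1) N with hlt | hge
    · have h2 : (k + 1) % (N:ℤ) = k % N + 1 := by
        rw [hstep, Int.emod_eq_of_lt (by omega) hlt]
      rw [h2]
      have := h.2.2.1 (k % (N:ℤ)).toNat (by omega)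
      rwa [show ((k % (N:ℤ)).toNat + 1) = (k % (N:ℤ) + 1).toNat by omega] at this
    · have hkN : k % (N:ℤ) = N - 1 := by omega
      have h2 : (k + 1) % (N:ℤ) = 0 := by
        rw [hstep, hkN]; simp
      rw [h2, hkN]
      have h3 := h.2.2.2
      rw [show ((N:ℤ) - 1).toNat = N - 1 by omega, show (Int.toNat 0) = 0 by simp]
      exact h3

lemma GoodZ.toIsHC {α : Type*} {N : ℕ} {G : SimpleGraph α} {f : ℤ → α}
    (hN : 0 < N) (h : GoodZ N G f) : IsHC N G (fun m => f m) := by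
  have hNZ : (0:ℤ) < N := by exact_mod_cast hN
  refine ⟨?_, ?_, ?_, ?_⟩
  · intro m₁ h₁ m₂ h₂ heq
    have hdvd := h.2.1 _ _ heq
    have : ((m₁ : ℤ) - m₂) = 0 := by
      rcases le_or_gt (m₂:ℤ) m₁ with hle | hle
      · exact int_dvd_small hNZ hdvd (by omega) (by omega)
      · have := int_dvd_small hNZ ((dvd_neg).mpr hdvd) (by omega) (by omega)
        omega
    omega
  · intro v
    obtain ⟨k, hk⟩ := h.2.2.1 v
    have h0 : 0 ≤ k % (N:ℤ) := Int.emod_nonneg k (by omega)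
    refine ⟨(k % (N:ℤ)).toNat, ?_, ?_⟩
    · have := Int.emod_lt_of_pos k hNZ
      omega
    · show f ((k % (N:ℤ)).toNat : ℤ) = v
      have : f ((k % (N:ℤ)).toNat : ℤ) = f k := by
        apply h.eq_of_dvd
        rw [Int.toNat_of_nonneg h0, Int.emod_def]
        exact ⟨-(k / N), by ring⟩
      rw [this, hk]
  · intro m hm
    have := h.2.2.2 (m : ℤ)
    show G.Adj (f m) (f ((m+1 : ℕ) : ℤ))
    rwa [show ((m + 1 : ℕ) : ℤ) = (m:ℤ) + 1 by push_cast; ring]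
  · have hadj := h.2.2.2 ((N : ℤ) - 1)
    have heq : f ((N:ℤ) - 1 + 1) = f 0 := by
      apply h.eq_of_dvd; simp
    rw [heq] at hadj
    show G.Adj (f ((N - 1 : ℕ) : ℤ)) (f ((0 : ℕ) : ℤ))
    rwa [show (((N - 1 : ℕ)) : ℤ) = (N:ℤ) - 1 by omega, show ((0:ℕ):ℤ) = 0 by simp]

lemma walk_ex {α : Type*} (G : SimpleGraph α) (g : ℕ → α) :
    ∀ k : ℕ, (∀ m, m < k → G.Adj (g (m + 1)) (g m)) →
    ∃ w : G.Walk (g k) (g 0),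
      w.support = (List.range (k + 1)).reverse.map g ∧
      w.edges = (List.range k).reverse.map (fun m => s(g (m + 1), g m)) := by
  have hrev : ∀ j : ℕ, List.map g (List.range (j+1)).reverse
      = g j :: List.map g (List.range j).reverse := by
    intro j; rw [List.range_succ]; simp
  have hrev2 : ∀ j : ℕ, List.map (fun m => s(g (m + 1), g m)) (List.range (j+1)).reverse
      = s(g (j+1), g j) :: List.map (fun m => s(g (m + 1), g m)) (List.range j).reverse := by
    intro j; rw [List.range_succ]; simp
  intro k
  induction k with
  | zero => exact fun _ => ⟨SimpleGraph.Walk.nil, by simp [List.range_succ], by simp⟩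
  | succ k ih =>
    intro hadj
    obtain ⟨w, hs, he⟩ := ih (fun m hm => hadj m (by omega))
    refine ⟨SimpleGraph.Walk.cons (hadj k (by omega)) w, ?_, ?_⟩
    · rw [SimpleGraph.Walk.support_cons, hs, hrev (k+1)]
    · rw [SimpleGraph.Walk.edges_cons, he, hrev2 k]

lemma isHC_to_ham {α : Type*} [DecidableEq α] {G : SimpleGraph α} {N : ℕ} (hN : 3 ≤ N)
    {g : ℕ → α} (h : IsHC N G g) :
    ∃ (v : α) (c : G.Walk v v), c.IsHamiltonianCycle := by
  obtain ⟨hinj, hsurj, hadj, hlast⟩ := h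
  obtain ⟨w, hs, he⟩ := walk_ex G g (N - 1)
    (fun m hm => (hadj m (by omega)).symm)
  have hnodup : ((List.range N).reverse.map g).Nodup := by
    refine List.Nodup.map_on ?_ (by simp [List.nodup_range])
    intro x hx y hy hxy
    simp only [List.mem_reverse, List.mem_range] at hx hy
    exact hinj x hx y hy hxy
  have hsN : w.support = (List.range N).reverse.map g := by
    rw [hs, show N - 1 + 1 = N by omega]
  refine ⟨g 0, SimpleGraph.Walk.cons hlast.symm w, ?_⟩
  rw [SimpleGraph.Walk.isHamiltonianCycle_iff_isCycle_and_support_count_tail_eq_one]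
  constructor
  · rw [SimpleGraph.Walk.cons_isCycle_iff]
    constructor
    · apply SimpleGraph.Walk.IsPath.mk'
      rw [hsN]; exact hnodup
    · rw [he]
      intro hmem
      obtain ⟨m, hm, hme⟩ := List.mem_map.mp hmem
      simp only [List.mem_reverse, List.mem_range] at hm
      rw [Sym2.eq_iff] at hme
      rcases hme with ⟨h1, h2⟩ | ⟨h1, h2⟩
      · have := hinj (m + 1) (by omega) 0 (by omega) h1
        omega
      · have e1 := hinj (m + 1) (by omega) (N - 1) (by omega) h1
        have e2 := hinj m (by omega) 0 (by omega) h2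
        omega
  · intro a
    rw [SimpleGraph.Walk.support_cons]
    simp only [List.tail_cons]
    rw [hsN]
    apply List.count_eq_one_of_mem hnodup
    obtain ⟨m, hm, hgm⟩ := hsurj a
    exact List.mem_map.mpr ⟨m, by simp [List.mem_range, hm], hgm⟩

lemma complete_case {n : ℕ} (hn : 2 ≤ n) (G : SimpleGraph (Fin n ⊕ Fin n))
    (hcomp : ∀ a b : Fin n, G.Adj (inl a) (inr b)) :
    ∃ g : ℕ → Fin n ⊕ Fin n, IsHC (2 * n) G g := by
  have hnpos : 0 < n := by omega
  refine ⟨fun m => if m % 2 = 0 then inl ⟨m / 2 % n, Nat.mod_lt _ hnpos⟩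
    else inr ⟨m / 2 % n, Nat.mod_lt _ hnpos⟩, ?_, ?_, ?_, ?_⟩
  · intro m₁ h₁ m₂ h₂ heq
    have e1 : m₁ / 2 % n = m₁ / 2 := Nat.mod_eq_of_lt (by omega)
    have e2 : m₂ / 2 % n = m₂ / 2 := Nat.mod_eq_of_lt (by omega)
    by_cases hp₁ : m₁ % 2 = 0 <;> by_cases hp₂ : m₂ % 2 = 0
    · simp only [if_pos hp₁, if_pos hp₂, Sum.inl.injEq, Fin.mk.injEq] at heq
      rw [e1, e2] at heq; omega
    · simp only [if_pos hp₁, if_neg hp₂] at heq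
      exact absurd heq (by simp)
    · simp only [if_neg hp₁, if_pos hp₂] at heq
      exact absurd heq (by simp)
    · simp only [if_neg hp₁, if_neg hp₂, Sum.inr.injEq, Fin.mk.injEq] at heq
      rw [e1, e2] at heq; omega
  · intro v
    rcases v with x | x
    · refine ⟨2 * x.val, by omega, ?_⟩
      simp [Nat.mul_mod_right, Nat.mul_div_cancel_left, Nat.mod_eq_of_lt x.isLt]
    · refine ⟨2 * x.val + 1, by omega, ?_⟩
      have : (2 * x.val + 1) % 2 = 1 := by omega
      simp [this, Nat.mod_eq_of_lt x.isLt, show (2 * x.val + 1) / 2 = x.val by omega]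
  · intro m hm
    rcases Nat.even_or_odd m with hp | hp <;> simp only [Nat.even_iff, Nat.odd_iff] at hp
    · have h1 : (m + 1) % 2 = 1 := by omega
      simp only [hp, h1]
      norm_num
      exact hcomp _ _
    · have h1 : (m + 1) % 2 = 0 := by omega
      simp only [hp, h1]
      norm_num
      exact (hcomp _ _).symm
  · have h1 : (2 * n - 1) % 2 = 1 := by omega
    simp only [h1]
    norm_num
    exact (hcomp _ _).symm

lemma path_to_cycle {n : ℕ} (hn : 2 ≤ n) (G : SimpleGraph (Fin n ⊕ Fin n))
    (hbipL : ∀ a b : Fin n, ¬ G.Adj (Sum.inl a) (Sum.inl b))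
    (hbipR : ∀ a b : Fin n, ¬ G.Adj (Sum.inr a) (Sum.inr b))
    (a b : Fin n) (hnadj : ¬ G.Adj (inl a) (inr b))
    (hdeg : n + 1 ≤ (G.neighborSet (inl a)).ncard + (G.neighborSet (inr b)).ncard)
    (u : ℤ → Fin n ⊕ Fin n)
    (heq : ∀ k k' : ℤ, (2 * (n:ℤ)) ∣ (k - k') → u k = u k')
    (hinj : ∀ k k' : ℤ, u k = u k' → (2 * (n:ℤ)) ∣ (k - k'))
    (hsurj : ∀ v, ∃ k, u k = v)
    (h0 : u 0 = inl a) (hlast : u (2 * (n:ℤ) - 1) = inr b)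
    (hadj : ∀ m : ℤ, 0 ≤ m → m < 2 * (n:ℤ) - 1 → G.Adj (u m) (u (m + 1))) :
    ∃ f, GoodZ (2 * n) G f := by
  classical
  have hnZ : (2:ℤ) ≤ n := by exact_mod_cast hn
  -- alternation of colors along the path
  have halt : ∀ j : ℕ, (j:ℤ) < 2 * (n:ℤ) →
      ((j % 2 = 0 → ∃ x, u j = inl x) ∧ (j % 2 = 1 → ∃ x, u j = inr x)) := by
    intro j
    induction j with
    | zero => exact fun _ => ⟨fun _ => ⟨a, h0⟩, fun h => by omega⟩
    | succ j ih =>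
      intro hj
      have hjlt : (j:ℤ) < 2 * (n:ℤ) := by push_cast at hj ⊢; omega
      have ihj := ih hjlt
      have hadjj : G.Adj (u j) (u ((j:ℤ) + 1)) := by
        apply hadj j (by positivity)
        push_cast at hj ⊢; omega
      have hcast : ((j:ℤ) + 1) = ((j + 1 : ℕ) : ℤ) := by push_cast; ring
      rw [hcast] at hadjj
      constructor
      · intro hpar
        obtain ⟨x, hx⟩ := ihj.2 (by omega)
        rw [hx] at hadjj
        rcases hv : u ((j+1 : ℕ) : ℤ) with y | y
        · exact ⟨y, rfl⟩
        · rw [hv] at hadjj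
          exact absurd hadjj (hbipR x y)
      · intro hpar
        obtain ⟨x, hx⟩ := ihj.1 (by omega)
        rw [hx] at hadjj
        rcases hv : u ((j+1 : ℕ) : ℤ) with y | y
        · rw [hv] at hadjj
          exact absurd hadjj (hbipL x y)
        · exact ⟨y, rfl⟩
  -- reduce a general integer index into [0, 2n)
  have hreduce : ∀ k : ℤ, ∃ j : ℕ, (j:ℤ) < 2 * (n:ℤ) ∧ u j = u k := by
    intro k
    have h2n : (0:ℤ) < 2 * (n:ℤ) := by omega
    refine ⟨(k % (2 * (n:ℤ))).toNat, ?_, ?_⟩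
    · have := Int.emod_lt_of_pos k (show (0:ℤ) < 2 * n by omega)
      have := Int.emod_nonneg k (show (2 * (n:ℤ)) ≠ 0 by omega)
      omega
    · apply heq
      have h0' : 0 ≤ k % (2 * (n:ℤ)) := Int.emod_nonneg k (by omega)
      rw [Int.toNat_of_nonneg h0', Int.emod_def]
      exact ⟨-(k / (2 * n)), by ring⟩
  -- the two finsets
  set A : Finset ℕ := (Finset.range n).filter (fun t => G.Adj (inr b) (u (2 * t))) with hA
  set B : Finset ℕ := (Finset.range n).filter (fun t => G.Adj (inl a) (u (2 * t + 1))) with hB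
  have hfinb := (G.neighborSet (inr b)).toFinite
  have hfina := (G.neighborSet (inl a)).toFinite
  have hcardA : A.card = (G.neighborSet (inr b)).ncard := by
    rw [Set.ncard_eq_toFinset_card _ hfinb]
    refine Finset.card_bij (i := fun (t : ℕ) (_ : t ∈ A) => u (2 * (t:ℤ))) ?_ ?_ ?_
    · intro t ht
      rw [Set.Finite.mem_toFinset]
      exact (Finset.mem_filter.mp ht).2
    · intro t₁ ht₁ t₂ ht₂ heq'
      have h1 := Finset.mem_range.mp (Finset.mem_filter.mp ht₁).1
      have h2 := Finset.mem_range.mp (Finset.mem_filter.mp ht₂).1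
      have := hinj _ _ heq'
      have h2' : ((2 : ℤ) * t₁ - 2 * t₂) = 0 := by
        rcases le_or_gt (t₂:ℤ) t₁ with h | h
        · exact int_dvd_small (by omega) this (by omega) (by push_cast; omega)
        · have := int_dvd_small (by omega) ((dvd_neg).mpr this) (by omega)
            (by push_cast; omega)
          omega
      omega
    · intro v hv
      rw [Set.Finite.mem_toFinset] at hv
      have hadjv : G.Adj (inr b) v := hv
      obtain ⟨k, hk⟩ := hsurj v
      obtain ⟨j, hjlt, hju⟩ := hreduce k
      rw [hk] at hju
      rcases hx : v with x | x
      · -- v = inl x ; j must be even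
        have hjpar : j % 2 = 0 := by
          by_contra hodd
          obtain ⟨y, hy⟩ := (halt j hjlt).2 (by omega)
          rw [hju, hx] at hy
          exact absurd hy (by simp)
        refine ⟨j / 2, ?_, ?_⟩
        · apply Finset.mem_filter.mpr
          constructor
          · apply Finset.mem_range.mpr
            omega
          · have : (2 * ((j/2 : ℕ):ℤ)) = (j:ℤ) := by
              push_cast; omega
            rw [this, hju, hx]
            exact hx ▸ hadjv
        · show u (2 * ((j/2 : ℕ):ℤ)) = inl x
          rw [show (2 * ((j/2 : ℕ):ℤ)) = (j:ℤ) by push_cast; omega, hju, hx]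
      · rw [hx] at hadjv
        exact absurd hadjv (hbipR b x)
  have hcardB : B.card = (G.neighborSet (inl a)).ncard := by
    rw [Set.ncard_eq_toFinset_card _ hfina]
    refine Finset.card_bij (i := fun (t : ℕ) (_ : t ∈ B) => u (2 * (t:ℤ) + 1)) ?_ ?_ ?_
    · intro t ht
      rw [Set.Finite.mem_toFinset]
      exact (Finset.mem_filter.mp ht).2
    · intro t₁ ht₁ t₂ ht₂ heq'
      have h1 := Finset.mem_range.mp (Finset.mem_filter.mp ht₁).1
      have h2 := Finset.mem_range.mp (Finset.mem_filter.mp ht₂).1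
      have := hinj _ _ heq'
      have h2' : ((2 : ℤ) * t₁ + 1 - (2 * t₂ + 1)) = 0 := by
        rcases le_or_gt (t₂:ℤ) t₁ with h | h
        · exact int_dvd_small (by omega) this (by omega) (by push_cast; omega)
        · have := int_dvd_small (by omega) ((dvd_neg).mpr this) (by omega)
            (by push_cast; omega)
          omega
      omega
    · intro v hv
      rw [Set.Finite.mem_toFinset] at hv
      have hadjv : G.Adj (inl a) v := hv
      obtain ⟨k, hk⟩ := hsurj v
      obtain ⟨j, hjlt, hju⟩ := hreduce k
      rw [hk] at hju
      rcases hx : v with x | x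
      · rw [hx] at hadjv
        exact absurd hadjv (hbipL a x)
      · have hjpar : j % 2 = 1 := by
          by_contra hodd
          obtain ⟨y, hy⟩ := (halt j hjlt).1 (by omega)
          rw [hju, hx] at hy
          exact absurd hy (by simp)
        refine ⟨j / 2, ?_, ?_⟩
        · apply Finset.mem_filter.mpr
          constructor
          · apply Finset.mem_range.mpr
            push_cast at hjlt; omega
          · have : (2 * ((j/2 : ℕ):ℤ) + 1) = (j:ℤ) := by
              push_cast; omega
            rw [this, hju, hx]
            exact hx ▸ hadjv
        · show u (2 * ((j/2 : ℕ):ℤ) + 1) = inr x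
          rw [show (2 * ((j/2 : ℕ):ℤ) + 1) = (j:ℤ) by push_cast; omega, hju, hx]
  -- a crossing exists
  have hcross : ∃ t, t ∈ A ∧ t ∈ B := by
    by_contra hno
    push_neg at hno
    have hdisj : Disjoint A B := by
      rw [Finset.disjoint_left]
      intro t htA htB
      exact hno t htA htB
    have hsub : A ∪ B ⊆ Finset.range n := by
      intro t ht
      rcases Finset.mem_union.mp ht with h | h
      · exact (Finset.mem_filter.mp h).1
      · exact (Finset.mem_filter.mp h).1
    have := Finset.card_union_of_disjoint hdisj
    have hle := Finset.card_le_card hsub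
    rw [this] at hle
    rw [Finset.card_range] at hle
    omega
  obtain ⟨t, htA, htB⟩ := hcross
  have htn : t < n := Finset.mem_range.mp (Finset.mem_filter.mp htA).1
  have hta : G.Adj (inr b) (u (2 * (t:ℤ))) := (Finset.mem_filter.mp htA).2
  have htb : G.Adj (inl a) (u (2 * (t:ℤ) + 1)) := (Finset.mem_filter.mp htB).2
  -- t ≠ 0 and t ≠ n - 1 automatically, but not needed; build the new cycle
  set N : ℤ := 2 * (n:ℤ) with hN
  set J : ℤ := 2 * (t:ℤ) with hJ
  have hJ0 : 0 ≤ J := by positivity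
  have hJ2 : J ≤ N - 2 := by omega
  have hmem : ∀ k : ℤ, 0 ≤ k % N ∧ k % N < N :=
    fun k => ⟨Int.emod_nonneg k (by omega), Int.emod_lt_of_pos k (by omega)⟩
  have hNnat : ((2 * n : ℕ) : ℤ) = N := by push_cast; omega
  refine ⟨fun k => if k % N ≤ J then u (k % N) else u (N + J - k % N), ?_, ?_, ?_, ?_⟩
  · intro k
    have hper : (k + ((2 * n : ℕ) : ℤ)) % N = k % N := by
      rw [hNnat]
      have := Int.add_mul_emod_self_left (a := k) (b := N) (c := 1)
      simpa using this
    simp only [hper]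
  · intro k k' heq'
    have hm := hmem k; have hm' := hmem k'
    simp only [] at heq'
    -- show k % N = k' % N
    have hmm : k % N = k' % N := by
      by_cases c1 : k % N ≤ J <;> by_cases c2 : k' % N ≤ J <;>
        simp only [if_pos, if_neg, c1, c2, if_true, if_false] at heq'
      · have := hinj _ _ heq'
        rcases le_or_gt (k' % N) (k % N) with h | h
        · have := int_dvd_small (show (0:ℤ) < N by omega) this (by omega) (by omega)
          omega
        · have := int_dvd_small (show (0:ℤ) < N by omega) ((dvd_neg).mpr this) (by omega) (by omega)
          omega
      · have := hinj _ _ heq'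
        -- k % N ≤ J < k' % N ; values k % N and N + J - k' % N
        have hv2 : J < N + J - k' % N ∧ N + J - k' % N ≤ N - 1 := by omega
        rcases le_or_gt (N + J - k' % N) (k % N) with h | h
        · have := int_dvd_small (show (0:ℤ) < N by omega) this (by omega) (by omega)
          omega
        · have := int_dvd_small (show (0:ℤ) < N by omega) ((dvd_neg).mpr this) (by omega) (by omega)
          omega
      · have := hinj _ _ heq'
        have hv2 : J < N + J - k % N ∧ N + J - k % N ≤ N - 1 := by omega
        rcases le_or_gt (k' % N) (N + J - k % N) with h | h
        · have := int_dvd_small (show (0:ℤ) < N by omega) this (by omega) (by omega)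
          omega
        · have := int_dvd_small (show (0:ℤ) < N by omega) ((dvd_neg).mpr this) (by omega) (by omega)
          omega
      · have := hinj _ _ heq'
        rcases le_or_gt (N + J - k' % N) (N + J - k % N) with h | h
        · have := int_dvd_small (show (0:ℤ) < N by omega) this (by omega) (by omega)
          omega
        · have := int_dvd_small (show (0:ℤ) < N by omega) ((dvd_neg).mpr this) (by omega) (by omega)
          omega
    rw [hNnat]
    have : (k - k') % N = 0 := by
      rw [Int.sub_emod, hmm]
      simp
    exact Int.dvd_of_emod_eq_zero this
  · intro v
    obtain ⟨k, hk⟩ := hsurj v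
    obtain ⟨j, hjlt, hju⟩ := hreduce k
    rw [hk] at hju
    by_cases hc : (j:ℤ) ≤ J
    · refine ⟨(j:ℤ), ?_⟩
      have hjm : (j:ℤ) % N = j := Int.emod_eq_of_lt (by positivity) hjlt
      simp only [hjm, if_pos hc, hju]
    · refine ⟨N + J - j, ?_⟩
      have hbound : 0 ≤ N + J - (j:ℤ) ∧ N + J - (j:ℤ) < N := by omega
      have hjm : (N + J - (j:ℤ)) % N = N + J - j := Int.emod_eq_of_lt (by omega) (by omega)
      simp only [hjm]
      rw [if_neg (show ¬ N + J - (j:ℤ) ≤ J by omega)]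
      rw [show N + J - (N + J - (j:ℤ)) = j by ring, hju]
  · intro k
    have hm := hmem k
    have hstep : (k + 1) % N = (k % N + 1) % N := by
      rw [Int.add_emod k 1 N, Int.emod_eq_of_lt (by omega) (by omega : (1:ℤ) < N)]
    rcases lt_trichotomy (k % N) J with hlt | heqJ | hgt
    · -- m < J
      have h2 : (k + 1) % N = k % N + 1 := by
        rw [hstep, Int.emod_eq_of_lt (by omega) (by omega)]
      simp only [h2, if_pos hlt.le, if_pos (by omega : k % N + 1 ≤ J)]
      exact hadj _ (by omega) (by omega)
    · -- m = J
      have h2 : (k + 1) % N = J + 1 := by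
        rw [hstep, heqJ, Int.emod_eq_of_lt (by omega) (by omega)]
      simp only [heqJ, h2, if_pos (le_refl J), if_neg (by omega : ¬ J + 1 ≤ J)]
      rw [show N + J - (J + 1) = N - 1 by ring, hlast]
      exact hta.symm
    · rcases lt_or_eq_of_le (show k % N ≤ N - 1 by omega) with hlt2 | heq2
      · -- J < m < N - 1
        have h2 : (k + 1) % N = k % N + 1 := by
          rw [hstep, Int.emod_eq_of_lt (by omega) (by omega)]
        simp only [h2, if_neg (by omega : ¬ k % N ≤ J), if_neg (by omega : ¬ k % N + 1 ≤ J)]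
        have hstep2 := hadj (N + J - (k % N + 1)) (by omega) (by omega)
        rw [show N + J - (k % N + 1) + 1 = N + J - k % N by ring] at hstep2
        exact hstep2.symm
      · -- m = N - 1
        have h2 : (k + 1) % N = 0 := by
          rw [hstep, show k % N + 1 = N by omega]
          simp
        simp only [h2, heq2, if_neg (by omega : ¬ (N:ℤ) - 1 ≤ J), if_pos (by omega : (0:ℤ) ≤ J)]
        rw [show N + J - (N - 1) = J + 1 by ring, h0]
        exact htb.symm

lemma crossing {n : ℕ} (hn : 2 ≤ n) (G : SimpleGraph (Fin n ⊕ Fin n))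
    (hbipL : ∀ a b : Fin n, ¬ G.Adj (Sum.inl a) (Sum.inl b))
    (hbipR : ∀ a b : Fin n, ¬ G.Adj (Sum.inr a) (Sum.inr b))
    (a b : Fin n) (hnadj : ¬ G.Adj (inl a) (inr b))
    (hdeg : n + 1 ≤ (G.neighborSet (inl a)).ncard + (G.neighborSet (inr b)).ncard)
    (f : ℤ → Fin n ⊕ Fin n)
    (hf : GoodZ (2 * n) (G ⊔ SimpleGraph.edge (inl a) (inr b)) f) :
    ∃ f', GoodZ (2 * n) G f' := by
  classical
  have hNnat : ((2 * n : ℕ) : ℤ) = 2 * (n:ℤ) := by push_cast; ring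
  have hNpos : (0:ℤ) < 2 * (n:ℤ) := by
    have : (2:ℤ) ≤ n := by exact_mod_cast hn
    omega
  have hpair : ∀ k : ℤ, ¬ G.Adj (f k) (f (k + 1)) →
      (f k = inl a ∧ f (k + 1) = inr b) ∨ (f k = inr b ∧ f (k + 1) = inl a) := by
    intro k hno
    have hadj := hf.2.2.2 k
    rw [SimpleGraph.sup_adj] at hadj
    rcases hadj with h | h
    · exact absurd h hno
    · rw [SimpleGraph.edge_adj] at h
      exact h.1
  by_cases hall : ∀ k : ℤ, G.Adj (f k) (f (k + 1))
  · exact ⟨f, hf.1, hf.2.1, hf.2.2.1, hall⟩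
  push_neg at hall
  obtain ⟨k0, hk0⟩ := hall
  have hfeq : ∀ k k' : ℤ, (2 * (n:ℤ)) ∣ (k - k') → f k = f k' := by
    intro k k' h
    exact hf.eq_of_dvd (by rw [hNnat]; exact h)
  have hfdvd : ∀ k k' : ℤ, f k = f k' → (2 * (n:ℤ)) ∣ (k - k') := by
    intro k k' h
    have := hf.2.1 k k' h
    rwa [hNnat] at this
  rcases hpair k0 hk0 with ⟨hr, hb⟩ | ⟨hb, hr⟩
  · -- f k0 = inl a, f (k0+1) = inr b : go backwards
    set u : ℤ → Fin n ⊕ Fin n := fun m => f (k0 - m) with hu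
    apply path_to_cycle hn G hbipL hbipR a b hnadj hdeg u
    · intro k k' h
      exact hfeq _ _ (by rw [show k0 - k - (k0 - k') = -(k - k') by ring]; exact dvd_neg.mpr h)
    · intro k k' h
      have := hfdvd _ _ h
      rw [show k0 - k - (k0 - k') = -(k - k') by ring] at this
      exact (dvd_neg.mp this)
    · intro v
      obtain ⟨k, hk⟩ := hf.2.2.1 v
      exact ⟨k0 - k, by simp [hu, hk]⟩
    · simpa [hu] using hr
    · show f (k0 - (2 * (n:ℤ) - 1)) = inr b
      rw [← hb]
      apply hfeq
      rw [show k0 - (2 * (n:ℤ) - 1) - (k0 + 1) = -(2 * (n:ℤ)) by ring]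
      exact dvd_neg.mpr dvd_rfl
    · intro m hm0 hm1
      show G.Adj (f (k0 - m)) (f (k0 - (m + 1)))
      have hGadj : (G ⊔ SimpleGraph.edge (inl a) (inr b)).Adj (f (k0 - m - 1)) (f (k0 - m)) := by
        have := hf.2.2.2 (k0 - m - 1)
        rwa [show k0 - m - 1 + 1 = k0 - m by ring] at this
      by_contra hno
      have hno' : ¬ G.Adj (f (k0 - m - 1)) (f (k0 - m)) := fun h => hno (by
        rw [show k0 - (m + 1) = k0 - m - 1 by ring]; exact h.symm)
      rcases hpair (k0 - m - 1) (by rwa [show k0 - m - 1 + 1 = k0 - m by ring]) with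
        ⟨h1, h2⟩ | ⟨h1, h2⟩
      · -- f (k0-m-1) = inl a = f k0
        rw [show k0 - m - 1 + 1 = k0 - m by ring] at h2
        have := hfdvd _ _ (h1.trans hr.symm)
        rw [show k0 - m - 1 - k0 = -(m + 1) by ring] at this
        have := int_dvd_small hNpos (dvd_neg.mp this) (by omega) (by omega)
        omega
      · rw [show k0 - m - 1 + 1 = k0 - m by ring] at h2
        have hd := hfdvd _ _ (h2.trans hr.symm)
        rw [show k0 - m - k0 = -m by ring] at hd
        have hm' := int_dvd_small hNpos (dvd_neg.mp hd) (by omega) (by omega)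
        -- m = 0, so f (k0 - 1) = inr b = f (k0 + 1)
        have hd2 := hfdvd _ _ (h1.trans hb.symm)
        rw [hm'] at hd2
        rw [show k0 - 0 - 1 - (k0 + 1) = -2 by ring] at hd2
        have := int_dvd_small hNpos (dvd_neg.mp hd2) (by omega) (by omega)
        omega
  · -- f k0 = inr b, f (k0+1) = inl a : go forwards
    set u : ℤ → Fin n ⊕ Fin n := fun m => f (k0 + 1 + m) with hu
    apply path_to_cycle hn G hbipL hbipR a b hnadj hdeg u
    · intro k k' h
      exact hfeq _ _ (by rw [show k0 + 1 + k - (k0 + 1 + k') = k - k' by ring]; exact h)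
    · intro k k' h
      have := hfdvd _ _ h
      rwa [show k0 + 1 + k - (k0 + 1 + k') = k - k' by ring] at this
    · intro v
      obtain ⟨k, hk⟩ := hf.2.2.1 v
      exact ⟨k - (k0 + 1), by simp [hu, show k0 + 1 + (k - (k0 + 1)) = k by ring, hk]⟩
    · simpa [hu] using hr
    · show f (k0 + 1 + (2 * (n:ℤ) - 1)) = inr b
      rw [← hb]
      apply hfeq
      rw [show k0 + 1 + (2 * (n:ℤ) - 1) - k0 = 2 * (n:ℤ) by ring]
    · intro m hm0 hm1
      show G.Adj (f (k0 + 1 + m)) (f (k0 + 1 + (m + 1)))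
      by_contra hno
      have hGadj := hpair (k0 + 1 + m) (by
        rwa [show k0 + 1 + m + 1 = k0 + 1 + (m + 1) by ring])
      rw [show k0 + 1 + m + 1 = k0 + 1 + (m + 1) by ring] at hGadj
      rcases hGadj with ⟨h1, h2⟩ | ⟨h1, h2⟩
      · have hd := hfdvd _ _ (h1.trans hr.symm)
        rw [show k0 + 1 + m - (k0 + 1) = m by ring] at hd
        have hm' := int_dvd_small hNpos hd (by omega) (by omega)
        -- m = 0, so f (k0 + 2) = inr b = f k0
        have hd2 := hfdvd _ _ (h2.trans hb.symm)
        rw [hm'] at hd2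
        rw [show k0 + 1 + (0 + 1) - k0 = 2 by ring] at hd2
        have := int_dvd_small hNpos hd2 (by omega) (by omega)
        omega
      · have hd := hfdvd _ _ (h1.trans hb.symm)
        rw [show k0 + 1 + m - k0 = m + 1 by ring] at hd
        have := int_dvd_small hNpos hd (by omega) (by omega)
        omega

lemma key {n : ℕ} (hn : 2 ≤ n) :
    ∀ (N : ℕ) (G : SimpleGraph (Fin n ⊕ Fin n)),
    (∀ a b : Fin n, ¬ G.Adj (Sum.inl a) (Sum.inl b)) →
    (∀ a b : Fin n, ¬ G.Adj (Sum.inr a) (Sum.inr b)) →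
    (∀ a : Fin n, n < 2 * (G.neighborSet (Sum.inl a)).ncard) →
    (∀ b : Fin n, n ≤ 2 * (G.neighborSet (Sum.inr b)).ncard) →
    {p : Fin n × Fin n | ¬ G.Adj (inl p.1) (inr p.2)}.ncard ≤ N →
    ∃ f, GoodZ (2 * n) G f := by
  intro N
  induction N with
  | zero =>
    intro G hbipL hbipR hred hblue hcard
    have hcomp : ∀ a b : Fin n, G.Adj (inl a) (inr b) := by
      intro a b
      by_contra hno
      have hpos : 0 < {p : Fin n × Fin n | ¬ G.Adj (inl p.1) (inr p.2)}.ncard := by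
        rw [Set.ncard_pos (Set.toFinite _)]
        exact ⟨(a, b), hno⟩
      omega
    obtain ⟨g, hg⟩ := complete_case hn G hcomp
    exact ⟨_, hg.toGoodZ (by omega)⟩
  | succ N ih =>
    intro G hbipL hbipR hred hblue hcard
    by_cases hcomp : ∀ a b : Fin n, G.Adj (inl a) (inr b)
    · obtain ⟨g, hg⟩ := complete_case hn G hcomp
      exact ⟨_, hg.toGoodZ (by omega)⟩
    push_neg at hcomp
    obtain ⟨a, b, hnadj⟩ := hcomp
    set G' := G ⊔ SimpleGraph.edge (inl a) (inr b) with hG'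
    have hadj' : ∀ x y : Fin n, G'.Adj (inl x) (inr y) ↔
        (G.Adj (inl x) (inr y) ∨ (x = a ∧ y = b)) := by
      intro x y
      rw [hG', SimpleGraph.sup_adj, SimpleGraph.edge_adj]
      constructor
      · rintro (h | ⟨(⟨h1, h2⟩ | ⟨h1, h2⟩), hne⟩)
        · exact Or.inl h
        · exact Or.inr ⟨by exact inl.inj h1, by exact inr.inj h2⟩
        · exact absurd h1 (by simp)
      · rintro (h | ⟨rfl, rfl⟩)
        · exact Or.inl h
        · exact Or.inr ⟨Or.inl ⟨rfl, rfl⟩, by simp⟩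
    have hbipL' : ∀ x y : Fin n, ¬ G'.Adj (inl x) (inl y) := by
      intro x y h
      rw [hG', SimpleGraph.sup_adj, SimpleGraph.edge_adj] at h
      rcases h with h | ⟨(⟨h1, h2⟩ | ⟨h1, h2⟩), _⟩
      · exact hbipL x y h
      · exact absurd h2 (by simp)
      · exact absurd h1 (by simp)
    have hbipR' : ∀ x y : Fin n, ¬ G'.Adj (inr x) (inr y) := by
      intro x y h
      rw [hG', SimpleGraph.sup_adj, SimpleGraph.edge_adj] at h
      rcases h with h | ⟨(⟨h1, h2⟩ | ⟨h1, h2⟩), _⟩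
      · exact hbipR x y h
      · exact absurd h1 (by simp)
      · exact absurd h2 (by simp)
    have hsub : ∀ v : Fin n ⊕ Fin n, G.neighborSet v ⊆ G'.neighborSet v := by
      intro v w hw
      exact Or.inl hw
    have hncard : ∀ v : Fin n ⊕ Fin n,
        (G.neighborSet v).ncard ≤ (G'.neighborSet v).ncard := by
      intro v
      exact Set.ncard_le_ncard (hsub v) (G'.neighborSet v).toFinite
    have hred' : ∀ x : Fin n, n < 2 * (G'.neighborSet (inl x)).ncard :=
      fun x => lt_of_lt_of_le (hred x) (by have := hncard (inl x); omega)
    have hblue' : ∀ y : Fin n, n ≤ 2 * (G'.neighborSet (inr y)).ncard :=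
      fun y => le_trans (hblue y) (by have := hncard (inr y); omega)
    have hfilter : {p : Fin n × Fin n | ¬ G'.Adj (inl p.1) (inr p.2)} =
        {p : Fin n × Fin n | ¬ G.Adj (inl p.1) (inr p.2)} \ {(a, b)} := by
      ext p
      simp only [Set.mem_setOf_eq, Set.mem_diff, Set.mem_singleton_iff, hadj' p.1 p.2]
      constructor
      · intro h2
        push_neg at h2
        refine ⟨h2.1, ?_⟩
        intro hp
        exact h2.2 (congrArg Prod.fst hp) (congrArg Prod.snd hp)
      · intro ⟨h3, h1⟩
        push_neg
        refine ⟨h3, fun ha hb => h1 ?_⟩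
        exact Prod.ext ha hb
    have hmem : (a, b) ∈ {p : Fin n × Fin n | ¬ G.Adj (inl p.1) (inr p.2)} := hnadj
    have hpos : 0 < {p : Fin n × Fin n | ¬ G.Adj (inl p.1) (inr p.2)}.ncard := by
      rw [Set.ncard_pos (Set.toFinite _)]
      exact ⟨(a, b), hmem⟩
    have hcard' : {p : Fin n × Fin n | ¬ G'.Adj (inl p.1) (inr p.2)}.ncard ≤ N := by
      rw [hfilter, Set.ncard_diff_singleton_of_mem hmem]
      omega
    obtain ⟨f, hf⟩ := ih G' hbipL' hbipR' hred' hblue' hcard'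
    have hdeg : n + 1 ≤ (G.neighborSet (inl a)).ncard + (G.neighborSet (inr b)).ncard := by
      have h1 := hred a
      have h2 := hblue b
      omega
    exact crossing hn G hbipL hbipR a b hnadj hdeg f hf

/-- Moon–Moser theorem: a balanced bipartite graph on `2n` vertices (`n ≥ 2`),
with red class `Sum.inl` and blue class `Sum.inr`, in which every red vertex has
degree `> n/2` and every blue vertex has degree `≥ n/2`, has a Hamiltonian cycle. -/
theorem stmt_0 (n : ℕ) (hn : 2 ≤ n) (G : SimpleGraph (Fin n ⊕ Fin n))
    (hbipL : ∀ a b : Fin n, ¬ G.Adj (Sum.inl a) (Sum.inl b))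
    (hbipR : ∀ a b : Fin n, ¬ G.Adj (Sum.inr a) (Sum.inr b))
    (hred : ∀ a : Fin n, n < 2 * (G.neighborSet (Sum.inl a)).ncard)
    (hblue : ∀ b : Fin n, n ≤ 2 * (G.neighborSet (Sum.inr b)).ncard) :
    ∃ (v : Fin n ⊕ Fin n) (c : G.Walk v v), c.IsHamiltonianCycle := by
  obtain ⟨f, hf⟩ := key hn {p : Fin n × Fin n | ¬ G.Adj (inl p.1) (inr p.2)}.ncard
    G hbipL hbipR hred hblue le_rfl
  have hhc := hf.toIsHC (by omega : 0 < 2 * n)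
  exact isHC_to_ham (by omega : 3 ≤ 2 * n) hhc
end

section
/- Let n ≥ 2, let k ≤ n/2, and let A ⊆ Z_{2n} be a set of k odd elements. Let B = (A + 1) ∪ (A − 1). If |B| = |A| + 1, then A is an arithmetic progression of common difference 2, i.e., A = {a, a+2, a+4, ..., a+2(k−1)} for some a ∈ Z_{2n}. -/
/-- Lemma 3.2 (second part): if `n ≥ 2`, `A ⊆ ℤ/2n` is a set of `k ≤ n/2` odd
elements and `|(A + 1) ∪ (A - 1)| = |A| + 1`, then `A` is an arithmetic
progression `{a, a+2, …, a+2(k-1)}` of common difference `2`. -/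
theorem stmt_4 (n : ℕ) (hn : 2 ≤ n) (k : ℕ) (hk : 2 * k ≤ n)
    (A : Finset (ZMod (2 * n))) (hA : A.card = k)
    (hodd : ∀ a ∈ A, a.val % 2 = 1)
    (hcard : (A.image (· + (1 : ZMod (2 * n))) ∪ A.image (· - (1 : ZMod (2 * n)))).card
      = A.card + 1) :
    ∃ a : ZMod (2 * n), A = (Finset.range k).image (fun i : ℕ => a + 2 * (i : ZMod (2 * n))) := by
  classical
  haveI : NeZero (2 * n) := ⟨by omega⟩
  have hcast : ∀ i j : ℕ, i < n → j < n → (2 * (i : ZMod (2*n)) = 2 * (j : ZMod (2*n))) → i = j := by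
    intro i j hi hj hij
    have h1 : ((2 * i : ℕ) : ZMod (2*n)) = ((2 * j : ℕ) : ZMod (2*n)) := by push_cast; linear_combination hij
    have h2 := congrArg ZMod.val h1
    rw [ZMod.val_natCast_of_lt (by omega), ZMod.val_natCast_of_lt (by omega)] at h2
    omega
  set T := A.image (· + (2 : ZMod (2*n))) with hT
  have hTcard : T.card = k := by
    rw [hT, Finset.card_image_of_injective _ (add_left_injective _), hA]
  have hunion : (A ∪ T).card = k + 1 := by
    have h1 : ((A.image (· + (1:ZMod (2*n))) ∪ A.image (· - (1:ZMod (2*n)))).image (· + (1:ZMod (2*n)))) = T ∪ A := by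
      rw [Finset.image_union, Finset.image_image, Finset.image_image]
      have e1 : ((· + (1:ZMod (2*n))) ∘ (· + (1:ZMod (2*n)))) = (· + (2:ZMod (2*n))) := by
        funext a; simp [Function.comp]; ring
      have e2 : ((· + (1:ZMod (2*n))) ∘ (· - (1:ZMod (2*n)))) = id := by
        funext a; simp [Function.comp]
      rw [e1, e2, Finset.image_id, hT]
    have h2 := Finset.card_image_of_injective
      (A.image (· + (1:ZMod (2*n))) ∪ A.image (· - (1:ZMod (2*n)))) (add_left_injective (1 : ZMod (2*n)))
    rw [h1, hcard, hA] at h2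
    rw [Finset.union_comm, h2]
  have hsd : (A \ T).card = 1 := by
    have := Finset.card_sdiff_add_card (s := A) (t := T)
    omega
  obtain ⟨c, hc⟩ := Finset.card_eq_one.mp hsd
  have hmemT : ∀ x : ZMod (2*n), x ∈ T ↔ x - (2:ZMod (2*n)) ∈ A := by
    intro x
    simp only [hT, Finset.mem_image]
    constructor
    · rintro ⟨a, ha, rfl⟩; simpa using ha
    · intro h; exact ⟨x - 2, h, by ring⟩
  have hcA : c ∈ A ∧ c ∉ T := by
    have : c ∈ A \ T := by rw [hc]; exact Finset.mem_singleton_self c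
    exact Finset.mem_sdiff.mp this
  have huniq : ∀ s ∈ A, s - 2 ∉ A → s = c := by
    intro s hs h2
    have : s ∈ A \ T := Finset.mem_sdiff.mpr ⟨hs, fun hT' => h2 ((hmemT s).mp hT')⟩
    rw [hc] at this; exact Finset.mem_singleton.mp this
  have hgap : ∀ s : ZMod (2*n), ∃ j, j < n ∧ s - 2 * (j:ℕ) ∉ A := by
    intro s
    by_contra h
    push_neg at h
    have hsub : (Finset.range n).image (fun j : ℕ => s - 2 * (j : ZMod (2*n))) ⊆ A := by
      intro x hx
      obtain ⟨j, hj, rfl⟩ := Finset.mem_image.mp hx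
      exact h j (Finset.mem_range.mp hj)
    have hinj : Set.InjOn (fun j : ℕ => s - 2 * (j : ZMod (2*n))) (Finset.range n) := by
      intro i hi j hj hij
      simp only [Finset.coe_range, Set.mem_Iio] at hi hj
      exact hcast i j hi hj (by linear_combination -hij)
    have h1 := Finset.card_image_of_injOn hinj
    rw [Finset.card_range] at h1
    have h2 := Finset.card_le_card hsub
    rw [h1, hA] at h2
    omega
  have horbit : ∀ s ∈ A, ∃ m : ℕ, s = c + 2 * (m : ZMod (2*n)) ∧ ∀ j ≤ m, c + 2 * (j : ZMod (2*n)) ∈ A := by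
    intro s hs
    have hex : ∃ t : ℕ, s - 2 * ((t+1 : ℕ) : ZMod (2*n)) ∉ A := by
      obtain ⟨j, hj, hja⟩ := hgap s
      rcases Nat.eq_zero_or_pos j with rfl | hj0
      · exact absurd hs (by simpa using hja)
      · exact ⟨j - 1, by rwa [Nat.sub_add_cancel hj0]⟩
    set m := Nat.find hex with hm
    have hm1 : s - 2 * ((m+1 : ℕ) : ZMod (2*n)) ∉ A := Nat.find_spec hex
    have hm2 : ∀ j, j ≤ m → s - 2 * (j : ZMod (2*n)) ∈ A := by
      intro j hj
      rcases Nat.eq_zero_or_pos j with rfl | hj0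
      · simpa using hs
      · have h3 := Nat.find_min hex (m := j - 1) (by omega)
        rw [Nat.sub_add_cancel hj0] at h3
        exact not_not.mp h3
    have hstart : s - 2 * (m : ZMod (2*n)) ∈ A := hm2 m le_rfl
    have hstart2 : (s - 2 * (m : ZMod (2*n))) - 2 ∉ A := by
      have e : s - 2 * (m : ZMod (2*n)) - 2 = s - 2 * ((m+1 : ℕ) : ZMod (2*n)) := by push_cast; ring
      rw [e]; exact hm1
    have hce : s - 2 * (m : ZMod (2*n)) = c := huniq _ hstart hstart2
    refine ⟨m, by linear_combination hce, ?_⟩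
    intro j hj
    have e : c + 2 * (j : ZMod (2*n)) = s - 2 * (((m - j : ℕ)) : ZMod (2*n)) := by
      rw [← hce]; push_cast [Nat.cast_sub hj]; ring
    rw [e]; exact hm2 _ (Nat.sub_le _ _)
  have hfill : ∀ i, i < k → c + 2 * (i : ZMod (2*n)) ∈ A := by
    by_contra h
    push_neg at h
    obtain ⟨i, hik, hi⟩ := h
    have hex : ∃ i, i < k ∧ c + 2 * (i : ZMod (2*n)) ∉ A := ⟨i, hik, hi⟩
    set i₀ := Nat.find hex with hi₀
    obtain ⟨hi₀k, hi₀A⟩ := Nat.find_spec hex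
    have hsub : A ⊆ (Finset.range i₀).image (fun j : ℕ => c + 2 * (j : ZMod (2*n))) := by
      intro s hs
      obtain ⟨m, rfl, hall⟩ := horbit s hs
      by_cases hmi : m < i₀
      · exact Finset.mem_image.mpr ⟨m, Finset.mem_range.mpr hmi, rfl⟩
      · exact absurd (hall i₀ (by omega)) hi₀A
    have h1 := Finset.card_le_card hsub
    have h2 := Finset.card_image_le (s := Finset.range i₀) (f := fun j : ℕ => c + 2 * (j : ZMod (2*n)))
    rw [Finset.card_range] at h2
    rw [hA] at h1
    omega
  refine ⟨c, ?_⟩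
  have hsub2 : (Finset.range k).image (fun i : ℕ => c + 2 * (i : ZMod (2*n))) ⊆ A := by
    intro x hx
    obtain ⟨i, hi, rfl⟩ := Finset.mem_image.mp hx
    exact hfill i (Finset.mem_range.mp hi)
  have hinj : Set.InjOn (fun i : ℕ => c + 2 * (i : ZMod (2*n))) (Finset.range k) := by
    intro i hi j hj hij
    simp only [Finset.coe_range, Set.mem_Iio] at hi hj
    exact hcast i j (by omega) (by omega) (by linear_combination hij)
  have hcardim := Finset.card_image_of_injOn hinj
  rw [Finset.card_range] at hcardim
  exact (Finset.eq_of_subset_of_card_le hsub2 (le_of_eq (hA.trans hcardim.symm))).symm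
end

section
/- For every even n ≥ 2 there exists a family G_1, ..., G_n of bipartite graphs on a common vertex set X of n red and n blue vertices, with red and blue classes independent in each G_i and minimum degree exactly n/2 in each G_i, such that no perfect matching M on X admits a bijection φ from the edges of M to {1, ..., n} with each edge e ∈ E(G_{φ(e)}). -/
def myAdj (n h : ℕ) (i : Fin n) : (Fin n ⊕ Fin n) → (Fin n ⊕ Fin n) → Prop
  | Sum.inl a, Sum.inr c => (a.val < h ↔ c.val < h) ↔ (i.val + 1 < n)
  | Sum.inr c, Sum.inl a => (a.val < h ↔ c.val < h) ↔ (i.val + 1 < n)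
  | _, _ => False

def myG (n h : ℕ) (i : Fin n) : SimpleGraph (Fin n ⊕ Fin n) where
  Adj := myAdj n h i
  symm := by constructor; rintro (a|a) (b|b) hadj <;> simp_all [myAdj]
  loopless := by constructor; rintro (a|a) hadj <;> simp_all [myAdj]

lemma card_lt_fin (n h : ℕ) (hh : h < n) :
    (Finset.univ.filter (fun c : Fin n => c.val < h)).card = h := by
  have : (Finset.univ.filter (fun c : Fin n => c.val < h)) = Finset.Iio (⟨h, hh⟩ : Fin n) := by
    ext c; simp [Fin.lt_def]
  rw [this, Fin.card_Iio]

lemma card_ge_fin (n h : ℕ) (hh : h < n) :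
    (Finset.univ.filter (fun c : Fin n => ¬ c.val < h)).card = n - h := by
  have : (Finset.univ.filter (fun c : Fin n => ¬ c.val < h)) = Finset.Ici (⟨h, hh⟩ : Fin n) := by
    ext c; simp [Fin.le_def]
  rw [this, Fin.card_Ici]

lemma prop_card (n h : ℕ) (hn : n = 2 * h) (hh : h < n) (P : Prop) [Decidable P] :
    Set.ncard {c : Fin n | (c.val < h ↔ P)} = h := by
  rw [Set.ncard_eq_toFinset_card']
  by_cases hP : P
  · have : {c : Fin n | (c.val < h ↔ P)}.toFinset
        = Finset.univ.filter (fun c : Fin n => c.val < h) := by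
      ext c; simp [hP]
    rw [this, card_lt_fin n h hh]
  · have : {c : Fin n | (c.val < h ↔ P)}.toFinset
        = Finset.univ.filter (fun c : Fin n => ¬ c.val < h) := by
      ext c; simp [hP]
    rw [this, card_ge_fin n h hh]; omega

lemma nbhd_ncard (n h : ℕ) (hn : n = 2 * h) (hh : h < n) (i : Fin n) (v : Fin n ⊕ Fin n) :
    2 * ((myG n h i).neighborSet v).ncard = n := by
  rcases v with a | c
  · have hset : (myG n h i).neighborSet (Sum.inl a)
        = Sum.inr '' {c : Fin n | (c.val < h ↔ ((a.val < h) ↔ (i.val + 1 < n)))} := by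
      ext w
      rcases w with w | w
      · constructor
        · intro hadj; exact absurd hadj (by simp [myG, myAdj])
        · rintro ⟨x, -, hx⟩; exact absurd hx (by simp)
      · have key : (myG n h i).Adj (Sum.inl a) (Sum.inr w)
            ↔ (w.val < h ↔ ((a.val < h) ↔ (i.val + 1 < n))) := by
          show ((a.val < h ↔ w.val < h) ↔ (i.val + 1 < n)) ↔ _
          tauto
        simp only [SimpleGraph.mem_neighborSet, key, Set.mem_image, Set.mem_setOf_eq]
        constructor
        · intro hw; exact ⟨w, hw, rfl⟩
        · rintro ⟨x, hx, hxe⟩; exact Sum.inr_injective hxe ▸ hx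
    rw [hset, Set.ncard_image_of_injective _ Sum.inr_injective,
      prop_card n h hn hh _]
    omega
  · have hset : (myG n h i).neighborSet (Sum.inr c)
        = Sum.inl '' {a : Fin n | (a.val < h ↔ ((c.val < h) ↔ (i.val + 1 < n)))} := by
      ext w
      rcases w with w | w
      · have key : (myG n h i).Adj (Sum.inr c) (Sum.inl w)
            ↔ (w.val < h ↔ ((c.val < h) ↔ (i.val + 1 < n))) := by
          show ((w.val < h ↔ c.val < h) ↔ (i.val + 1 < n)) ↔ _
          tauto
        simp only [SimpleGraph.mem_neighborSet, key, Set.mem_image, Set.mem_setOf_eq]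
        constructor
        · intro hw; exact ⟨w, hw, rfl⟩
        · rintro ⟨x, hx, hxe⟩; exact Sum.inl_injective hxe ▸ hx
      · constructor
        · intro hadj; exact absurd hadj (by simp [myG, myAdj])
        · rintro ⟨x, -, hx⟩; exact absurd hx (by simp)
    rw [hset, Set.ncard_image_of_injective _ Sum.inl_injective,
      prop_card n h hn hh _]
    omega

/-- Sharpness of Theorem 1.5: for every even `n ≥ 2` there is a family of `n`
bipartite graphs on `n` red and `n` blue common vertices, with red/blue classes
independent and every vertex of degree exactly `n/2` in each graph, admitting no
perfect matching transversal. -/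
theorem stmt_9 (n : ℕ) (hn : 2 ≤ n) (hne : Even n) :
    ∃ G : Fin n → SimpleGraph (Fin n ⊕ Fin n),
      (∀ i, ∀ a b : Fin n, ¬ (G i).Adj (Sum.inl a) (Sum.inl b)) ∧
      (∀ i, ∀ a b : Fin n, ¬ (G i).Adj (Sum.inr a) (Sum.inr b)) ∧
      (∀ i, ∀ v : Fin n ⊕ Fin n, 2 * ((G i).neighborSet v).ncard = n) ∧
      ¬ ∃ M : Fin n → Sym2 (Fin n ⊕ Fin n),
          (∀ i, M i ∈ (G i).edgeSet) ∧ (∀ v : Fin n ⊕ Fin n, ∃! i, v ∈ M i) := by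
  obtain ⟨h, hh⟩ := hne
  have hn2 : n = 2 * h := by omega
  have hhn : h < n := by omega
  refine ⟨myG n h, ?_, ?_, ?_, ?_⟩
  · intro i a b; simp [myG, myAdj]
  · intro i a b; simp [myG, myAdj]
  · intro i v; exact nbhd_ncard n h hn2 hhn i v
  · rintro ⟨M, hM, huniq⟩
    have key : ∀ i, ∃ a c : Fin n, M i = s(Sum.inl a, Sum.inr c) ∧
        ((a.val < h ↔ c.val < h) ↔ (i.val + 1 < n)) := by
      intro i
      have main : ∀ e : Sym2 (Fin n ⊕ Fin n), e ∈ (myG n h i).edgeSet →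
          ∃ a c : Fin n, e = s(Sum.inl a, Sum.inr c) ∧
            ((a.val < h ↔ c.val < h) ↔ (i.val + 1 < n)) := by
        intro e
        induction e using Sym2.ind with
        | _ u v =>
          intro he
          have hadj : (myG n h i).Adj u v := he
          rcases u with a | c <;> rcases v with a' | c'
          · exact absurd hadj (by simp [myG, myAdj])
          · exact ⟨a, c', rfl, hadj⟩
          · exact ⟨a', c, Sym2.eq_swap, hadj⟩
          · exact absurd hadj (by simp [myG, myAdj])
      exact main (M i) (hM i)
    choose r b hMeq hcond using key
    have hmemr : ∀ x i, (Sum.inl x : Fin n ⊕ Fin n) ∈ M i ↔ r i = x := by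
      intro x i
      rw [hMeq i, Sym2.mem_iff]
      constructor
      · rintro (h1 | h1) <;> simp_all
      · rintro rfl; left; rfl
    have hmemb : ∀ x i, (Sum.inr x : Fin n ⊕ Fin n) ∈ M i ↔ b i = x := by
      intro x i
      rw [hMeq i, Sym2.mem_iff]
      constructor
      · rintro (h1 | h1) <;> simp_all
      · rintro rfl; right; rfl
    have hrbij : Function.Bijective r := by
      rw [Fintype.bijective_iff_surjective_and_card]
      refine ⟨fun x => ?_, rfl⟩
      obtain ⟨i, hi, -⟩ := huniq (Sum.inl x)
      exact ⟨i, (hmemr x i).1 hi⟩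
    have hbbij : Function.Bijective b := by
      rw [Fintype.bijective_iff_surjective_and_card]
      refine ⟨fun x => ?_, rfl⟩
      obtain ⟨i, hi, -⟩ := huniq (Sum.inr x)
      exact ⟨i, (hmemb x i).1 hi⟩
    set S := Finset.univ.filter (fun i : Fin n => (r i).val < h) with hS
    set T := Finset.univ.filter (fun i : Fin n => (b i).val < h) with hT
    have hcards : ∀ f : Fin n → Fin n, Function.Bijective f →
        (Finset.univ.filter (fun i : Fin n => (f i).val < h)).card
          = (Finset.univ.filter (fun x : Fin n => x.val < h)).card := by
      intro f hf
      apply Finset.card_bij (fun i _ => f i)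
      · intro i hi; simp only [Finset.mem_filter, Finset.mem_univ, true_and] at hi ⊢; exact hi
      · intro i _ j _ hij; exact hf.1 hij
      · intro x hx
        obtain ⟨i, rfl⟩ := hf.2 x
        simp only [Finset.mem_filter, Finset.mem_univ, true_and] at hx
        exact ⟨i, by simp [hx], rfl⟩
    have hST : S.card = T.card := by rw [hS, hT, hcards r hrbij, hcards b hbbij]
    set L : Fin n := ⟨n - 1, by omega⟩ with hL
    have hLcond : ¬ ((r L).val < h ↔ (b L).val < h) := by
      have := hcond L
      simp only [hL] at this
      have h2 : ¬ (n - 1 + 1 < n) := by omega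
      tauto
    have herase : S.erase L = T.erase L := by
      ext i
      simp only [Finset.mem_erase, hS, hT, Finset.mem_filter, Finset.mem_univ, true_and]
      constructor
      · rintro ⟨hiL, hi⟩
        refine ⟨hiL, ?_⟩
        have hi1 : i.val + 1 < n := by
          have : i.val ≠ n - 1 := fun hc => hiL (by rw [hL]; exact Fin.ext hc)
          omega
        exact ((hcond i).2 hi1).1 hi
      · rintro ⟨hiL, hi⟩
        refine ⟨hiL, ?_⟩
        have hi1 : i.val + 1 < n := by
          have : i.val ≠ n - 1 := fun hc => hiL (by rw [hL]; exact Fin.ext hc)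
          omega
        exact ((hcond i).2 hi1).2 hi
    have hSL : L ∈ S ↔ ¬ L ∈ T := by
      simp only [hS, hT, Finset.mem_filter, Finset.mem_univ, true_and]
      tauto
    have c1 : S.card = (S.erase L).card + (if L ∈ S then 1 else 0) := by
      by_cases hls : L ∈ S
      · rw [if_pos hls, Finset.card_erase_of_mem hls]
        have := Finset.card_pos.2 ⟨L, hls⟩
        omega
      · rw [if_neg hls, Finset.erase_eq_of_notMem hls]; omega
    have c2 : T.card = (T.erase L).card + (if L ∈ T then 1 else 0) := by
      by_cases hls : L ∈ T
      · rw [if_pos hls, Finset.card_erase_of_mem hls]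
        have := Finset.card_pos.2 ⟨L, hls⟩
        omega
      · rw [if_neg hls, Finset.erase_eq_of_notMem hls]; omega
    rw [herase] at c1
    by_cases hls : L ∈ S
    · rw [if_pos hls] at c1
      rw [if_neg (hSL.1 hls)] at c2
      omega
    · rw [if_neg hls] at c1
      have hlt : L ∈ T := by by_contra hc; exact hls (hSL.2 hc)
      rw [if_pos hlt] at c2
      omega
end

section
/- Let n ≥ 4, let X be a set of n red and n blue vertices, and let G_1, ..., G_{2n} be bipartite graphs on X with red and blue classes independent, red degrees > n/2, and blue degrees ≥ n/2 in each G_i. Suppose C is a partial transversal isomorphic to a cycle of length 2n − 2 with injection φ missing exactly the indices 2n−1 and 2n, and suppose the family contains no partial transversal isomorphic to a cycle of some fixed even length ℓ with 4 ≤ ℓ ≤ 2n − 4. Then every edge v_j v_{j+1} of C belongs to E(G_{2n−1}) or E(G_{2n}). -/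
open SimpleGraph

namespace Stmt13Aux
variable {V : Type*} {G : SimpleGraph V}

theorem walk_support_eq {u v : V} (w : G.Walk u v) :
    w.support = (List.range (w.length + 1)).map w.getVert := by
  induction w with
  | nil => simp [List.range_succ]
  | cons h p ih =>
      rename_i a b c
      rw [Walk.support_cons, ih, Walk.length_cons, List.range_succ_eq_map (n := p.length + 1)]
      simp only [List.map_cons, List.map_map]
      rfl

theorem sym2_mem_edges {u v : V} (w : G.Walk u v) {i : ℕ} (hi : i < w.length) :
    s(w.getVert i, w.getVert (i + 1)) ∈ w.edges := by
  induction w generalizing i with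
  | nil => simp at hi
  | cons h p ih =>
      rename_i a b c
      rcases Nat.eq_zero_or_pos i with rfl | hpos
      · simp [Walk.getVert_zero, Walk.getVert_cons_succ]
      · obtain ⟨k, rfl⟩ : ∃ k, i = k + 1 := ⟨i - 1, by omega⟩
        rw [Walk.edges_cons]
        apply List.mem_cons_of_mem
        rw [Walk.length_cons] at hi
        have h2 := ih (i := k) (by omega)
        simpa [Walk.getVert_cons_succ] using h2

theorem edges_exist {u v : V} (w : G.Walk u v) :
    ∀ {e : Sym2 V}, e ∈ w.edges → ∃ i, i < w.length ∧ e = s(w.getVert i, w.getVert (i + 1)) := by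
  induction w with
  | nil => intro e hmem; simp at hmem
  | cons h p ih =>
      rename_i a b c
      intro e hmem
      rw [Walk.edges_cons, List.mem_cons] at hmem
      rcases hmem with hm1 | hm2
      · refine ⟨0, by simp [Walk.length_cons], ?_⟩
        simpa [Walk.getVert_zero, Walk.getVert_cons_succ] using hm1
      · obtain ⟨i, hi, hei⟩ := ih hm2
        refine ⟨i + 1, by rw [Walk.length_cons]; omega, ?_⟩
        simpa [Walk.getVert_cons_succ] using hei

theorem cycle_getVert_inj {u : V} {w : G.Walk u u} (hw : w.IsCycle)
    {i k : ℕ} (hi : i < w.length) (hk : k < w.length)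
    (h : w.getVert (i+1) = w.getVert (k+1)) : i = k := by
  have hnd : w.support.tail.Nodup := hw.support_nodup
  rw [walk_support_eq, List.range_succ_eq_map] at hnd
  simp only [List.map_cons, List.tail_cons, List.map_map] at hnd
  have hinj := List.inj_on_of_nodup_map (by exact hnd)
  exact hinj (List.mem_range.mpr hi) (List.mem_range.mpr hk) (by simpa using h)

theorem cycle_getVert_inj' {u : V} {w : G.Walk u u} (hw : w.IsCycle)
    {i k : ℕ} (hi : i < w.length) (hk : k < w.length)
    (h : w.getVert i = w.getVert k) : i = k := by
  rcases Nat.eq_zero_or_pos i with rfl | hip <;> rcases Nat.eq_zero_or_pos k with rfl | hkp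
  · rfl
  · exfalso
    have h3 : w.length - 1 = k - 1 := cycle_getVert_inj hw (by omega) (by omega)
      (by rw [show w.length - 1 + 1 = w.length by omega, w.getVert_length,
            show k - 1 + 1 = k by omega]
          simpa using h)
    omega
  · exfalso
    have h3 : i - 1 = w.length - 1 := cycle_getVert_inj hw (by omega) (by omega)
      (by rw [show w.length - 1 + 1 = w.length by omega, w.getVert_length,
            show i - 1 + 1 = i by omega]
          simpa using h)
    omega
  · have h3 : i - 1 = k - 1 := cycle_getVert_inj hw (by omega) (by omega)
      (by rw [show i - 1 + 1 = i by omega, show k - 1 + 1 = k by omega]; exact h)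
    omega

end Stmt13Aux

namespace Stmt13Aux
variable {V : Type*}

/-- a walk in the complete graph along `vf a, vf (a+1), ..., vf (a+k)` -/
def arcWalk (vf : ℕ → V) (hne : ∀ i, vf i ≠ vf (i + 1)) :
    (a k : ℕ) → (⊤ : SimpleGraph V).Walk (vf a) (vf (a + k))
  | _, 0 => Walk.nil
  | a, k + 1 =>
      Walk.cons (by simpa using hne a)
        ((arcWalk vf hne (a + 1) k).copy rfl (congrArg vf (by omega)))

@[simp] theorem arcWalk_length (vf : ℕ → V) (hne : ∀ i, vf i ≠ vf (i + 1)) (a k : ℕ) :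
    (arcWalk vf hne a k).length = k := by
  induction k generalizing a with
  | zero => rfl
  | succ k ih => simp [arcWalk, ih]

theorem arcWalk_support (vf : ℕ → V) (hne : ∀ i, vf i ≠ vf (i + 1)) (a k : ℕ) :
    (arcWalk vf hne a k).support = (List.range (k + 1)).map (fun i => vf (a + i)) := by
  induction k generalizing a with
  | zero => simp [arcWalk, List.range_succ]
  | succ k ih =>
      rw [arcWalk]
      rw [Walk.support_cons, Walk.support_copy, ih, List.range_succ_eq_map (n := k + 1)]
      simp only [List.map_cons, List.map_map, List.cons.injEq]
      refine ⟨by simp, List.map_congr_left fun i _ => ?_⟩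
      simp only [Function.comp_apply]
      exact congrArg vf (by omega)

theorem arcWalk_edges (vf : ℕ → V) (hne : ∀ i, vf i ≠ vf (i + 1)) (a k : ℕ) :
    (arcWalk vf hne a k).edges = (List.range k).map (fun i => s(vf (a + i), vf (a + i + 1))) := by
  induction k generalizing a with
  | zero => simp [arcWalk]
  | succ k ih =>
      rw [arcWalk]
      rw [Walk.edges_cons, Walk.edges_copy, ih, List.range_succ_eq_map (n := k)]
      simp only [List.map_cons, List.map_map, List.cons.injEq]
      refine ⟨by simp, List.map_congr_left fun i _ => ?_⟩
      simp only [Function.comp_apply]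
      have h1 : a + 1 + i = a + (i + 1) := by omega
      rw [h1]

end Stmt13Aux
namespace Stmt13AuxC
open Stmt13Aux

variable {V : Type*}

theorem topAdj {x y : V} (h : x ≠ y) : (⊤ : SimpleGraph V).Adj x y := by simpa using h

/-- cycle `v0, v1, v_u, v_{u+1}, ..., v_{u+k}, v0` -/
theorem cycleWin3 (vert : ℕ → V) (P u k : ℕ)
    (hne1 : ∀ i, vert i ≠ vert (i + 1))
    (vne2 : ∀ i j : ℕ, i < j → j ≤ P → ¬(i = 0 ∧ j = P) → vert i ≠ vert j)
    (hu2 : 2 ≤ u) (hk1 : 1 ≤ k) (hsP : u + k < P) :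
    ∃ d : (⊤ : SimpleGraph V).Walk (vert 0) (vert 0),
      d.IsCycle ∧ d.length = k + 3 ∧
      d.edges = s(vert 0, vert 1) :: s(vert 1, vert u) ::
        ((List.range k).map (fun i => s(vert (u+i), vert (u+i+1))) ++ [s(vert (u+k), vert 0)]) := by
  have ha01 : (⊤ : SimpleGraph V).Adj (vert 0) (vert 1) :=
    topAdj (vne2 0 1 (by omega) (by omega) (by omega))
  have ha1u : (⊤ : SimpleGraph V).Adj (vert 1) (vert u) :=
    topAdj (vne2 1 u (by omega) (by omega) (by omega))
  have hask0 : (⊤ : SimpleGraph V).Adj (vert (u+k)) (vert 0) :=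
    topAdj (vne2 0 (u+k) (by omega) (by omega) (by omega)).symm
  refine ⟨Walk.cons ha01 (Walk.cons ha1u
    ((arcWalk vert hne1 u k).append (Walk.cons hask0 Walk.nil))), ?_, ?_, ?_⟩
  · -- IsCycle
    rw [SimpleGraph.Walk.cons_isCycle_iff]
    constructor
    · apply SimpleGraph.Walk.IsPath.mk'
      rw [SimpleGraph.Walk.support_cons, SimpleGraph.Walk.support_append, arcWalk_support,
        SimpleGraph.Walk.support_cons, SimpleGraph.Walk.support_nil]
      simp only [List.tail_cons]
      refine List.nodup_cons.mpr ⟨?_, ?_⟩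
      · intro hmem
        rcases List.mem_append.mp hmem with hm | hm
        · obtain ⟨i, hi, hv⟩ := List.mem_map.mp hm
          rw [List.mem_range] at hi
          exact vne2 1 (u+i) (by omega) (by omega) (by omega) hv.symm
        · rw [List.mem_singleton] at hm
          exact vne2 0 1 (by omega) (by omega) (by omega) hm.symm
      · refine List.nodup_append'.mpr ⟨?_, List.nodup_singleton _, ?_⟩
        · refine List.Nodup.map_on ?_ List.nodup_range
          intro i hi j hj hv
          rw [List.mem_range] at hi hj
          by_contra hij
          rcases Nat.lt_trichotomy i j with h | h | h
          · exact vne2 (u+i) (u+j) (by omega) (by omega) (by omega) hv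
          · exact hij h
          · exact vne2 (u+j) (u+i) (by omega) (by omega) (by omega) hv.symm
        · intro x hx hx2
          obtain ⟨i, hi, rfl⟩ := List.mem_map.mp hx
          rw [List.mem_range] at hi
          rw [List.mem_singleton] at hx2
          exact vne2 0 (u+i) (by omega) (by omega) (by omega) hx2.symm
    · rw [SimpleGraph.Walk.edges_cons, SimpleGraph.Walk.edges_append, arcWalk_edges,
        SimpleGraph.Walk.edges_cons, SimpleGraph.Walk.edges_nil]
      intro hmem
      rcases List.mem_cons.mp hmem with h | h
      · rcases Sym2.eq_iff.mp h with ⟨h1, h2⟩ | ⟨h1, h2⟩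
        · exact vne2 0 1 (by omega) (by omega) (by omega) h1
        · exact vne2 0 u (by omega) (by omega) (by omega) h1
      · rcases List.mem_append.mp h with h | h
        · obtain ⟨i, hi, hv⟩ := List.mem_map.mp h
          rw [List.mem_range] at hi
          rcases Sym2.eq_iff.mp hv with ⟨h1, h2⟩ | ⟨h1, h2⟩
          · exact vne2 0 (u+i) (by omega) (by omega) (by omega) h1.symm
          · exact vne2 0 (u+i+1) (by omega) (by omega) (by omega) h2.symm
        · rw [List.mem_singleton] at h
          rcases Sym2.eq_iff.mp h with ⟨h1, h2⟩ | ⟨h1, h2⟩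
          · exact vne2 0 1 (by omega) (by omega) (by omega) h2.symm
          · exact vne2 1 (u+k) (by omega) (by omega) (by omega) h2
  · simp only [SimpleGraph.Walk.length_cons, SimpleGraph.Walk.length_append,
      arcWalk_length, SimpleGraph.Walk.length_nil]
    try omega
  · rw [SimpleGraph.Walk.edges_cons, SimpleGraph.Walk.edges_cons,
      SimpleGraph.Walk.edges_append, arcWalk_edges, SimpleGraph.Walk.edges_cons,
      SimpleGraph.Walk.edges_nil]

/-- cycle `v0, v_s, v_{s-1}, ..., v_1, v_u, v_{u+1}, ..., v_P = v0` -/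
theorem cycleWin1 (vert : ℕ → V) (P u s : ℕ)
    (hne1 : ∀ i, vert i ≠ vert (i + 1))
    (vne2 : ∀ i j : ℕ, i < j → j ≤ P → ¬(i = 0 ∧ j = P) → vert i ≠ vert j)
    (hvP0 : vert P = vert 0)
    (h3s : 3 ≤ s) (hsu : s + 3 ≤ u) (huP : u + 2 ≤ P) :
    ∃ d : (⊤ : SimpleGraph V).Walk (vert 0) (vert 0),
      d.IsCycle ∧ d.length = s + P - u + 1 ∧
      d.edges = s(vert 0, vert s) ::
        (((List.range (s-1)).map (fun i => s(vert (1+i), vert (1+i+1)))).reverse ++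
          (s(vert 1, vert u) :: (List.range (P-u)).map (fun i => s(vert (u+i), vert (u+i+1))))) := by
  have ha0s : (⊤ : SimpleGraph V).Adj (vert 0) (vert s) :=
    topAdj (vne2 0 s (by omega) (by omega) (by omega))
  have ha1u : (⊤ : SimpleGraph V).Adj (vert 1) (vert u) :=
    topAdj (vne2 1 u (by omega) (by omega) (by omega))
  have hA'cast : vert (u + (P - u)) = vert 0 := by
    rw [show u + (P - u) = P by omega]; exact hvP0
  have hRcast : vert (1 + (s - 1)) = vert s := by
    rw [show 1 + (s - 1) = s by omega]
  refine ⟨Walk.cons ha0s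
    ((((arcWalk vert hne1 1 (s-1)).copy rfl hRcast).reverse).append
      (Walk.cons ha1u ((arcWalk vert hne1 u (P-u)).copy rfl hA'cast))), ?_, ?_, ?_⟩
  · rw [SimpleGraph.Walk.cons_isCycle_iff]
    constructor
    · apply SimpleGraph.Walk.IsPath.mk'
      rw [SimpleGraph.Walk.support_append, SimpleGraph.Walk.support_reverse,
        SimpleGraph.Walk.support_copy, arcWalk_support, SimpleGraph.Walk.support_cons,
        SimpleGraph.Walk.support_copy, arcWalk_support]
      simp only [List.tail_cons]
      refine List.nodup_append'.mpr ⟨?_, ?_, ?_⟩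
      · rw [List.nodup_reverse]
        refine List.Nodup.map_on ?_ List.nodup_range
        intro i hi j hj hv
        rw [List.mem_range] at hi hj
        by_contra hij
        rcases Nat.lt_trichotomy i j with h | h | h
        · exact vne2 (1+i) (1+j) (by omega) (by omega) (by omega) hv
        · exact hij h
        · exact vne2 (1+j) (1+i) (by omega) (by omega) (by omega) hv.symm
      · refine List.Nodup.map_on ?_ List.nodup_range
        intro i hi j hj hv
        rw [List.mem_range] at hi hj
        by_contra hij
        rcases Nat.lt_trichotomy i j with h | h | h
        · exact vne2 (u+i) (u+j) (by omega) (by omega) (by omega) hv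
        · exact hij h
        · exact vne2 (u+j) (u+i) (by omega) (by omega) (by omega) hv.symm
      · intro x hx hx2
        rw [List.mem_reverse] at hx
        obtain ⟨i, hi, rfl⟩ := List.mem_map.mp hx
        obtain ⟨i', hi', hv⟩ := List.mem_map.mp hx2
        rw [List.mem_range] at hi hi'
        exact vne2 (1+i) (u+i') (by omega) (by omega) (by omega) hv.symm
    · rw [SimpleGraph.Walk.edges_append, SimpleGraph.Walk.edges_reverse,
        SimpleGraph.Walk.edges_copy, arcWalk_edges, SimpleGraph.Walk.edges_cons,
        SimpleGraph.Walk.edges_copy, arcWalk_edges]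
      intro hmem
      rcases List.mem_append.mp hmem with h | h
      · rw [List.mem_reverse] at h
        obtain ⟨i, hi, hv⟩ := List.mem_map.mp h
        rw [List.mem_range] at hi
        rcases Sym2.eq_iff.mp hv with ⟨h1, h2⟩ | ⟨h1, h2⟩
        · exact vne2 0 (1+i) (by omega) (by omega) (by omega) h1.symm
        · exact vne2 (1+i) s (by omega) (by omega) (by omega) h1
      · rcases List.mem_cons.mp h with h | h
        · rcases Sym2.eq_iff.mp h with ⟨h1, h2⟩ | ⟨h1, h2⟩
          · exact vne2 0 1 (by omega) (by omega) (by omega) h1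
          · exact vne2 1 s (by omega) (by omega) (by omega) h2.symm
        · obtain ⟨i, hi, hv⟩ := List.mem_map.mp h
          rw [List.mem_range] at hi
          rcases Sym2.eq_iff.mp hv with ⟨h1, h2⟩ | ⟨h1, h2⟩
          · exact vne2 0 (u+i) (by omega) (by omega) (by omega) h1.symm
          · exact vne2 s (u+i) (by omega) (by omega) (by omega) h1.symm
  · simp only [SimpleGraph.Walk.length_cons, SimpleGraph.Walk.length_append,
      SimpleGraph.Walk.length_reverse, SimpleGraph.Walk.length_copy, arcWalk_length]
    try omega
  · rw [SimpleGraph.Walk.edges_cons, SimpleGraph.Walk.edges_append,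
      SimpleGraph.Walk.edges_reverse, SimpleGraph.Walk.edges_copy, arcWalk_edges,
      SimpleGraph.Walk.edges_cons, SimpleGraph.Walk.edges_copy, arcWalk_edges]

end Stmt13AuxC


open Stmt13Aux Stmt13AuxC in
set_option maxHeartbeats 4000000 in
/-- Claim 3.5: let `C` be a partial transversal isomorphic to a cycle of length
`2n - 2` whose injection misses exactly the indices `2n - 1` and `2n` (here the
last two elements of `Fin (2n)`), and suppose the family has no partial
transversal isomorphic to a cycle of a fixed even length `ℓ`, `4 ≤ ℓ ≤ 2n - 4`.
Then every edge of `C` belongs to `G_{2n-1}` or to `G_{2n}`. -/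
theorem stmt_13 (n : ℕ) (hn : 4 ≤ n) (G : Fin (2 * n) → SimpleGraph (Fin n ⊕ Fin n))
    (hbipL : ∀ i, ∀ a b : Fin n, ¬ (G i).Adj (Sum.inl a) (Sum.inl b))
    (hbipR : ∀ i, ∀ a b : Fin n, ¬ (G i).Adj (Sum.inr a) (Sum.inr b))
    (hred : ∀ i, ∀ a : Fin n, n < 2 * ((G i).neighborSet (Sum.inl a)).ncard)
    (hblue : ∀ i, ∀ b : Fin n, n ≤ 2 * ((G i).neighborSet (Sum.inr b)).ncard)
    (ℓ : ℕ) (hle : Even ℓ) (hl4 : 4 ≤ ℓ) (hlu : ℓ ≤ 2 * n - 4)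
    (v : Fin n ⊕ Fin n) (c : (⊤ : SimpleGraph (Fin n ⊕ Fin n)).Walk v v)
    (hc : c.IsCycle) (hlen : c.length = 2 * n - 2)
    (φ : {e : Sym2 (Fin n ⊕ Fin n) // e ∈ c.edges} → Fin (2 * n))
    (hinj : Function.Injective φ) (hmem : ∀ e, e.val ∈ (G (φ e)).edgeSet)
    (hmiss : ∀ e, (φ e : ℕ) < 2 * n - 2)
    (hnoℓ : ¬ ∃ (w : Fin n ⊕ Fin n) (d : (⊤ : SimpleGraph (Fin n ⊕ Fin n)).Walk w w),
        d.IsCycle ∧ d.length = ℓ ∧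
        ∃ ψ : {e : Sym2 (Fin n ⊕ Fin n) // e ∈ d.edges} → Fin (2 * n),
          Function.Injective ψ ∧ ∀ e, e.val ∈ (G (ψ e)).edgeSet) :
    ∀ e ∈ c.edges,
      e ∈ (G ⟨2 * n - 2, by omega⟩).edgeSet ∨ e ∈ (G ⟨2 * n - 1, by omega⟩).edgeSet := by
  classical
  intro e he
  by_contra hcon
  push_neg at hcon
  obtain ⟨heA, heB⟩ := hcon
  set P : ℕ := 2 * n - 2 with hPdef
  have hP6 : 6 ≤ P := by omega
  have hlP : ℓ ≤ P - 2 := by omega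
  have hl2 : ℓ % 2 = 0 := Nat.even_iff.mp hle
  -- the position of e on the cycle
  obtain ⟨j, hj, hej⟩ := edges_exist c he
  rw [hlen] at hj
  -- relative coordinates
  set vert : ℕ → (Fin n ⊕ Fin n) := fun i => c.getVert ((j + i) % P) with hvertdef
  have hmod1 : ∀ m : ℕ, (m + 1) % P = (m % P + 1) % P := by
    intro m
    conv_lhs => rw [Nat.add_mod]
    rw [Nat.mod_eq_of_lt (show (1:ℕ) < P by omega)]
  have vert_congr : ∀ i k : ℕ, i % P = k % P → vert i = vert k := by
    intro i k h
    show c.getVert _ = c.getVert _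
    rw [Nat.add_mod j i, Nat.add_mod j k, h]
  -- injectivity
  have vinj : ∀ i k : ℕ, vert i = vert k → i % P = k % P := by
    intro i k h
    have h1 : (j + i) % P = (j + k) % P :=
      cycle_getVert_inj' hc (by rw [hlen]; exact Nat.mod_lt _ (by omega))
        (by rw [hlen]; exact Nat.mod_lt _ (by omega)) h
    have h2 : (j + i) ≡ (j + k) [MOD P] := h1
    have h3 : i ≡ k [MOD P] := Nat.ModEq.add_left_cancel' j h2
    exact h3
  have vneLT : ∀ i k : ℕ, i < P → k < P → i ≠ k → vert i ≠ vert k := by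
    intro i k hi hk hik h
    exact hik (by rw [← Nat.mod_eq_of_lt hi, ← Nat.mod_eq_of_lt hk]; exact vinj i k h)
  have hvP0 : vert P = vert 0 := vert_congr P 0 (by simp [Nat.mod_self])
  -- vert i ≤ P versions (index P allowed, equals index 0)
  have vne2 : ∀ i k : ℕ, i < k → k ≤ P → ¬(i = 0 ∧ k = P) → vert i ≠ vert k := by
    intro i k hik hk hnc
    rcases Nat.lt_or_ge k P with h | h
    · exact vneLT i k (by omega) h (by omega)
    · have hkP : k = P := by omega
      subst hkP
      rw [hvP0]
      intro h
      exact vneLT 0 i (by omega) (by omega) (by omega) (h.symm)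
  have hne1 : ∀ i : ℕ, vert i ≠ vert (i + 1) := by
    intro i h
    have h2 := vinj _ _ h
    rw [hmod1 i] at h2
    have hr : i % P < P := Nat.mod_lt _ (by omega)
    rcases Nat.lt_or_ge (i % P + 1) P with hlt | hge
    · rw [Nat.mod_eq_of_lt hlt] at h2; omega
    · have : i % P + 1 = P := by omega
      rw [this, Nat.mod_self] at h2; omega
  -- edges of the cycle
  set E : ℕ → Sym2 (Fin n ⊕ Fin n) := fun i => s(vert i, vert (i + 1)) with hEdef
  have eMem : ∀ i : ℕ, E i ∈ c.edges := by
    intro i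
    show s(vert i, vert (i+1)) ∈ c.edges
    have hr : (j + i) % P < P := Nat.mod_lt _ (by omega)
    have hv1 : vert (i+1) = c.getVert (((j+i) % P + 1) % P) := by
      show c.getVert _ = _
      rw [show j + (i+1) = (j+i) + 1 by omega, hmod1 (j+i)]
    rcases Nat.lt_or_ge ((j+i) % P + 1) P with hlt | hge
    · rw [hv1, Nat.mod_eq_of_lt hlt]
      have := sym2_mem_edges c (i := (j+i) % P) (by rw [hlen]; exact hr)
      exact this
    · have hPP : (j+i) % P + 1 = P := by omega
      rw [hv1, hPP, Nat.mod_self]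
      have hgv : c.getVert 0 = c.getVert P := by
        rw [Walk.getVert_zero, show P = c.length from hlen.symm, c.getVert_length]
      have := sym2_mem_edges c (i := P - 1) (by rw [hlen]; omega)
      rw [show P - 1 + 1 = P by omega] at this
      show s(c.getVert ((j+i) % P), c.getVert 0) ∈ c.edges
      rw [hgv, show (j+i) % P = P - 1 by omega]
      exact this
  have hejE : e = E 0 := by
    rw [hej]
    show _ = s(vert 0, vert 1)
    have h0 : vert 0 = c.getVert j := by
      show c.getVert _ = _
      rw [Nat.add_zero, Nat.mod_eq_of_lt hj]
    have h1 : vert 1 = c.getVert (j + 1) := by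
      show c.getVert _ = _
      rcases Nat.lt_or_ge (j+1) P with hlt | hge
      · rw [Nat.mod_eq_of_lt hlt]
      · have hjP : j + 1 = P := by omega
        rw [hjP, Nat.mod_self, Walk.getVert_zero, ← hjP]
        rw [show j + 1 = c.length by omega, c.getVert_length]
    rw [h0, h1]
  -- alternation
  have mixed : ∀ (γ : Fin (2*n)) (x y : Fin n ⊕ Fin n), (G γ).Adj x y → y.isLeft = !x.isLeft := by
    intro γ x y hxy
    rcases x with a | a <;> rcases y with b | b
    · exact absurd hxy (hbipL _ a b)
    · simp
    · simp
    · exact absurd hxy (hbipR _ a b)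
  have hEadj : ∀ i : ℕ, (G (φ ⟨E i, eMem i⟩)).Adj (vert i) (vert (i+1)) := by
    intro i
    have h1 := hmem ⟨E i, eMem i⟩
    exact (SimpleGraph.mem_edgeSet _).mp h1
  have hside : ∀ i : ℕ, (vert (i+1)).isLeft = !(vert i).isLeft := by
    intro i
    exact mixed _ _ _ (hEadj i)
  have hpar : ∀ i : ℕ, (vert i).isLeft = if i % 2 = 0 then (vert 0).isLeft else !(vert 0).isLeft := by
    intro i
    induction i with
    | zero => simp
    | succ i ih =>
        rw [hside i, ih]
        rcases Nat.even_or_odd i with hev | hod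
        · rw [if_pos (Nat.even_iff.mp hev),
            if_neg (show ¬((i+1) % 2 = 0) by have := Nat.even_iff.mp hev; omega)]
        · rw [if_neg (by have := Nat.odd_iff.mp hod; omega : ¬(i % 2 = 0)),
            if_pos (by have := Nat.odd_iff.mp hod; omega : (i+1) % 2 = 0), Bool.not_not]
  -- the two missing colors
  set A : Fin (2*n) := ⟨2*n-2, by omega⟩ with hAdef
  set B : Fin (2*n) := ⟨2*n-1, by omega⟩ with hBdef
  have heA' : ¬ (G A).Adj (vert 0) (vert 1) := by
    intro h
    exact heA (by rw [hejE]; exact (SimpleGraph.mem_edgeSet _).mpr h)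
  have heB' : ¬ (G B).Adj (vert 1) (vert 0) := by
    intro h
    refine heB ?_
    rw [hejE]
    show s(vert 0, vert 1) ∈ _
    rw [Sym2.eq_swap]
    exact (SimpleGraph.mem_edgeSet _).mpr h
  -- position Finsets
  set Oodd : Finset ℕ := (Finset.range P).filter (fun i => i % 2 = 1) with hOodd
  set Oeven : Finset ℕ := (Finset.range P).filter (fun i => i % 2 = 0) with hOeven
  have cardOodd : Oodd.card = n - 1 := by
    have himg : Oodd = (Finset.range (n-1)).image (fun t => 2*t+1) := by
      ext i
      simp only [hOodd, Finset.mem_filter, Finset.mem_range, Finset.mem_image]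
      constructor
      · rintro ⟨h1, h2⟩; exact ⟨i / 2, by omega, by omega⟩
      · rintro ⟨t, ht, rfl⟩; omega
    rw [himg, Finset.card_image_of_injective _ (fun a b h => by omega), Finset.card_range]
  have cardOeven : Oeven.card = n - 1 := by
    have himg : Oeven = (Finset.range (n-1)).image (fun t => 2*t) := by
      ext i
      simp only [hOeven, Finset.mem_filter, Finset.mem_range, Finset.mem_image]
      constructor
      · rintro ⟨h1, h2⟩; exact ⟨i / 2, by omega, by omega⟩
      · rintro ⟨t, ht, rfl⟩; omega
    rw [himg, Finset.card_image_of_injective _ (fun a b h => by omega), Finset.card_range]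
  -- the class Finsets
  have cardClass : ∀ b : Bool,
      (Finset.univ.filter (fun x : Fin n ⊕ Fin n => x.isLeft = b)).card = n := by
    intro b
    cases b
    · have : (Finset.univ.filter (fun x : Fin n ⊕ Fin n => x.isLeft = false))
          = Finset.univ.image Sum.inr := by
        ext x
        simp only [Finset.mem_filter, Finset.mem_univ, true_and, Finset.mem_image]
        rcases x with a | a <;> simp
      rw [this, Finset.card_image_of_injective _ Sum.inr_injective, Finset.card_univ,
        Fintype.card_fin]
    · have : (Finset.univ.filter (fun x : Fin n ⊕ Fin n => x.isLeft = true))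
          = Finset.univ.image Sum.inl := by
        ext x
        simp only [Finset.mem_filter, Finset.mem_univ, true_and, Finset.mem_image]
        rcases x with a | a <;> simp
      rw [this, Finset.card_image_of_injective _ Sum.inl_injective, Finset.card_univ,
        Fintype.card_fin]
  -- counting lemma
  have count : ∀ (γ : Fin (2*n)) (w : Fin n ⊕ Fin n) (b : Bool) (O : Finset ℕ),
      (∀ i ∈ O, i < P) → (∀ i ∈ O, (vert i).isLeft = b) → O.card = n - 1 →
      (∀ x, (G γ).Adj w x → x.isLeft = b) →
      ((G γ).neighborSet w).ncard ≤ (O.filter (fun i => (G γ).Adj w (vert i))).card + 1 := by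
    intro γ w b O hOP hOb hOcard hnb
    set Nf : Finset (Fin n ⊕ Fin n) := ((G γ).neighborSet w).toFinset with hNf
    have hnc : ((G γ).neighborSet w).ncard = Nf.card := Set.ncard_eq_toFinset_card' _
    set CL : Finset (Fin n ⊕ Fin n) := Finset.univ.filter (fun x => x.isLeft = b) with hCL
    set Qv : Finset ℕ := O.filter (fun i => (G γ).Adj w (vert i)) with hQv
    have hNfCL : Nf ⊆ CL := by
      intro x hx
      rw [hNf, Set.mem_toFinset, SimpleGraph.mem_neighborSet] at hx
      simp only [hCL, Finset.mem_filter, Finset.mem_univ, true_and]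
      exact hnb x hx
    have hOimg : O.image vert ⊆ CL := by
      intro x hx
      obtain ⟨i, hi, rfl⟩ := Finset.mem_image.mp hx
      simp only [hCL, Finset.mem_filter, Finset.mem_univ, true_and]
      exact hOb i hi
    have hOimgcard : (O.image vert).card = n - 1 := by
      rw [Finset.card_image_of_injOn, hOcard]
      intro i hi k hk h
      have := vinj i k h
      rw [Nat.mod_eq_of_lt (hOP i hi), Nat.mod_eq_of_lt (hOP k hk)] at this
      exact this
    have hkey : Nf ⊆ (Qv.image vert) ∪ (CL \ (O.image vert)) := by
      intro x hx
      by_cases hx2 : x ∈ O.image vert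
      · obtain ⟨i, hi, rfl⟩ := Finset.mem_image.mp hx2
        refine Finset.mem_union_left _ (Finset.mem_image.mpr ⟨i, ?_, rfl⟩)
        rw [hQv, Finset.mem_filter]
        refine ⟨hi, ?_⟩
        rw [hNf, Set.mem_toFinset, SimpleGraph.mem_neighborSet] at hx
        exact hx
      · exact Finset.mem_union_right _ (Finset.mem_sdiff.mpr ⟨hNfCL hx, hx2⟩)
    calc ((G γ).neighborSet w).ncard = Nf.card := hnc
      _ ≤ ((Qv.image vert) ∪ (CL \ (O.image vert))).card := Finset.card_le_card hkey
      _ ≤ (Qv.image vert).card + (CL \ (O.image vert)).card := Finset.card_union_le _ _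
      _ ≤ Qv.card + (CL.card - (O.image vert).card) := by
          have h1 := Finset.card_image_le (s := Qv) (f := vert)
          have h2 := Finset.card_sdiff_of_subset hOimg
          omega
      _ ≤ Qv.card + 1 := by
          rw [hOimgcard, cardClass b]
          omega
  -- the neighbour-position sets
  set Q : Finset ℕ := Oodd.filter (fun i => (G A).Adj (vert 0) (vert i)) with hQdef
  set Pst : Finset ℕ := Oeven.filter (fun i => (G B).Adj (vert 1) (vert i)) with hPstdef
  have hQP : ∀ s ∈ Q, s % 2 = 1 ∧ s < P := by
    intro s hs
    rw [hQdef, Finset.mem_filter, hOodd, Finset.mem_filter, Finset.mem_range] at hs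
    exact ⟨hs.1.2, hs.1.1⟩
  have hPstP : ∀ u ∈ Pst, u % 2 = 0 ∧ u < P := by
    intro u hu
    rw [hPstdef, Finset.mem_filter, hOeven, Finset.mem_filter, Finset.mem_range] at hu
    exact ⟨hu.1.2, hu.1.1⟩
  have h1Q : (1 : ℕ) ∉ Q := by
    intro h
    rw [hQdef, Finset.mem_filter] at h
    exact heA' h.2
  have h0P : (0 : ℕ) ∉ Pst := by
    intro h
    rw [hPstdef, Finset.mem_filter] at h
    exact heB' h.2
  -- lower bound on |Q| + |Pst|
  have hQcard : ((G A).neighborSet (vert 0)).ncard ≤ Q.card + 1 := by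
    refine count A (vert 0) (!(vert 0).isLeft) Oodd ?_ ?_ cardOodd ?_
    · intro i hi
      rw [hOodd, Finset.mem_filter, Finset.mem_range] at hi
      exact hi.1
    · intro i hi
      rw [hOodd, Finset.mem_filter] at hi
      rw [hpar i, if_neg (by omega : ¬(i % 2 = 0))]
    · intro x hx
      exact mixed _ _ _ hx
  have hPcard : ((G B).neighborSet (vert 1)).ncard ≤ Pst.card + 1 := by
    refine count B (vert 1) ((vert 0).isLeft) Oeven ?_ ?_ cardOeven ?_
    · intro i hi
      rw [hOeven, Finset.mem_filter, Finset.mem_range] at hi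
      exact hi.1
    · intro i hi
      rw [hOeven, Finset.mem_filter] at hi
      rw [hpar i, if_pos hi.2]
    · intro x hx
      rw [mixed _ _ _ hx, hside 0, Bool.not_not]
  have hdeg : n + 1 ≤ ((G A).neighborSet (vert 0)).ncard + ((G B).neighborSet (vert 1)).ncard := by
    have h1 := hEadj 0
    rcases hx : vert 0 with a | a <;> rcases hy : vert 1 with b | b <;> rw [hx, hy] at h1
    · exact absurd h1 (hbipL _ a b)
    · have r1 := hred A a
      have r2 := hblue B b
      omega
    · have r1 := hblue A a
      have r2 := hred B b
      omega
    · exact absurd h1 (hbipR _ a b)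
  have hsum : n - 1 ≤ Q.card + Pst.card := by omega
  -- the shift map
  set f : ℕ → ℕ := fun s => if s < ℓ - 1 then s + P - ℓ + 1 else s - (ℓ - 3) with hfdef
  have hQ3 : ∀ s ∈ Q, 3 ≤ s := by
    intro s hs
    have h1 := (hQP s hs).1
    have : s ≠ 1 := fun h => h1Q (h ▸ hs)
    omega
  have hfQ : ∀ s ∈ Q, (f s) % 2 = 0 ∧ 2 ≤ f s ∧ f s < P ∧
      (s < ℓ - 1 → f s = s + P - ℓ + 1) ∧ (ℓ - 1 ≤ s → f s = s - (ℓ - 3)) := by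
    intro s hs
    obtain ⟨hs2, hsP⟩ := hQP s hs
    have hs3 := hQ3 s hs
    simp only [hfdef]
    by_cases hsl : s < ℓ - 1
    · rw [if_pos hsl]
      refine ⟨by omega, by omega, by omega, fun _ => rfl, fun h => by omega⟩
    · rw [if_neg hsl]
      refine ⟨by omega, by omega, by omega, fun h => by omega, fun _ => rfl⟩
  by_cases hwin : ∃ s ∈ Q, f s ∈ Pst
  case neg =>
    -- no good pair : pigeonhole contradiction
    have himgsub : Q.image f ⊆ Oeven := by
      intro x hx
      obtain ⟨s, hs, rfl⟩ := Finset.mem_image.mp hx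
      obtain ⟨he1, he2, he3, _, _⟩ := hfQ s hs
      rw [hOeven, Finset.mem_filter, Finset.mem_range]
      exact ⟨he3, he1⟩
    have hPsub : Pst ⊆ Oeven := by
      rw [hPstdef]; exact Finset.filter_subset _ _
    have hdisj : Disjoint Pst (Q.image f) := by
      rw [Finset.disjoint_right]
      intro x hx hx2
      obtain ⟨s, hs, rfl⟩ := Finset.mem_image.mp hx
      exact hwin ⟨s, hs, hx2⟩
    have hfinj : Set.InjOn f Q := by
      intro s1 hs1 s2 hs2 h
      obtain ⟨_, _, _, hb1, hb2⟩ := hfQ s1 hs1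
      obtain ⟨_, _, _, hc1, hc2⟩ := hfQ s2 hs2
      obtain ⟨hp1, hq1⟩ := hQP s1 hs1
      obtain ⟨hp2, hq2⟩ := hQP s2 hs2
      have h31 := hQ3 s1 hs1
      have h32 := hQ3 s2 hs2
      by_cases ha : s1 < ℓ - 1 <;> by_cases hb : s2 < ℓ - 1
      · rw [hb1 ha, hc1 hb] at h; omega
      · rw [hb1 ha, hc2 (by omega)] at h; omega
      · rw [hb2 (by omega), hc1 hb] at h; omega
      · rw [hb2 (by omega), hc2 (by omega)] at h; omega
    have h0img : (0 : ℕ) ∉ Q.image f := by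
      intro h
      obtain ⟨s, hs, hsf⟩ := Finset.mem_image.mp h
      obtain ⟨_, h2, _, _, _⟩ := hfQ s hs
      omega
    have hins : insert 0 (Pst ∪ Q.image f) ⊆ Oeven := by
      intro x hx
      rcases Finset.mem_insert.mp hx with rfl | hx
      · rw [hOeven, Finset.mem_filter, Finset.mem_range]
        exact ⟨by omega, by omega⟩
      · rcases Finset.mem_union.mp hx with hx | hx
        · exact hPsub hx
        · exact himgsub hx
    have hcard1 : (insert 0 (Pst ∪ Q.image f)).card = 1 + Pst.card + Q.card := by
      rw [Finset.card_insert_of_notMem (by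
        intro h
        rcases Finset.mem_union.mp h with h | h
        · exact h0P h
        · exact h0img h)]
      rw [Finset.card_union_of_disjoint hdisj, Finset.card_image_of_injOn hfinj]
      omega
    have := Finset.card_le_card hins
    rw [hcard1, cardOeven] at this
    omega
  case pos =>
    obtain ⟨s, hsQ, hfsP⟩ := hwin
    obtain ⟨hs2, hsP⟩ := hQP s hsQ
    have hs3 := hQ3 s hsQ
    set u : ℕ := f s with hudef
    obtain ⟨hu2, hu2', huP, hfb1, hfb2⟩ := hfQ s hsQ
    have hadjA : (G A).Adj (vert 0) (vert s) := by
      rw [hQdef, Finset.mem_filter] at hsQ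
      exact hsQ.2
    have hadjB : (G B).Adj (vert 1) (vert u) := by
      rw [hPstdef, Finset.mem_filter] at hfsP
      exact hfsP.2
    have hMISS : ∀ (x : Sym2 (Fin n ⊕ Fin n)) (hx : x ∈ c.edges), ((φ ⟨x, hx⟩ : Fin (2*n)) : ℕ) < P :=
      fun x hx => hmiss ⟨x, hx⟩
    -- generic colouring constructor
    have hBv : (B : ℕ) = 2*n-1 := rfl
    have hAv : (A : ℕ) = 2*n-2 := rfl
    have mkψ : ∀ (w : Fin n ⊕ Fin n) (d : (⊤ : SimpleGraph (Fin n ⊕ Fin n)).Walk w w)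
        (ch1 ch2 : Sym2 (Fin n ⊕ Fin n)),
        (∀ y ∈ d.edges, y ∈ c.edges ∨ y = ch1 ∨ y = ch2) →
        ch1 ∈ (G B).edgeSet → ch2 ∈ (G A).edgeSet →
        ∃ ψ : {e : Sym2 (Fin n ⊕ Fin n) // e ∈ d.edges} → Fin (2 * n),
          Function.Injective ψ ∧ ∀ e, e.val ∈ (G (ψ e)).edgeSet := by
      intro w d ch1 ch2 hchar hc1 hc2
      refine ⟨fun ep => if h : ep.val ∈ c.edges then φ ⟨ep.val, h⟩
        else if ep.val = ch1 then B else A, ?_, ?_⟩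
      · rintro ⟨x, hx⟩ ⟨y, hy⟩ h
        dsimp only at h
        apply Subtype.ext
        show x = y
        by_cases h1 : x ∈ c.edges <;> by_cases h2 : y ∈ c.edges
        · rw [dif_pos h1, dif_pos h2] at h
          have h3 := hinj h
          exact congrArg Subtype.val h3
        · rw [dif_pos h1, dif_neg h2] at h
          exfalso
          have hv := hmiss ⟨x, h1⟩
          split_ifs at h
          · have h4 := congrArg Fin.val h
            omega
          · have h4 := congrArg Fin.val h
            omega
        · rw [dif_neg h1, dif_pos h2] at h
          exfalso
          have hv := hmiss ⟨y, h2⟩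
          split_ifs at h
          · have h4 := congrArg Fin.val h
            omega
          · have h4 := congrArg Fin.val h
            omega
        · rw [dif_neg h1, dif_neg h2] at h
          by_cases hx1 : x = ch1 <;> by_cases hy1 : y = ch1
          · rw [hx1, hy1]
          · rw [if_pos hx1, if_neg hy1] at h
            exfalso
            have h4 := congrArg Fin.val h
            omega
          · rw [if_neg hx1, if_pos hy1] at h
            exfalso
            have h4 := congrArg Fin.val h
            omega
          · rcases hchar x hx with hcx | hcx | hcx
            · exact absurd hcx h1
            · exact absurd hcx hx1
            · rcases hchar y hy with hcy | hcy | hcy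
              · exact absurd hcy h2
              · exact absurd hcy hy1
              · rw [hcx, hcy]
      · rintro ⟨x, hx⟩
        dsimp only
        split_ifs with h1 h2
        · exact hmem ⟨x, h1⟩
        · rw [h2]; exact hc1
        · rcases hchar x hx with h | h | h
          · exact absurd h h1
          · exact absurd h h2
          · rw [h]; exact hc2
    by_cases hsl : s < ℓ - 1
    · -- the wrap-around cycle  v0, v_s, ..., v_1, v_u, ..., v_P
      have hueq : u = s + P - ℓ + 1 := hfb1 hsl
      have hs_le : s ≤ ℓ - 3 := by omega
      have hsu : s + 3 ≤ u := by omega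
      have huP' : u + 2 ≤ P := by omega
      obtain ⟨d, hdc, hdl, hde⟩ := cycleWin1 vert P u s hne1 vne2 hvP0 (by omega) hsu huP'
      have hlen' : d.length = ℓ := by rw [hdl]; omega
      have hchar : ∀ y ∈ d.edges,
          y ∈ c.edges ∨ y = s(vert 1, vert u) ∨ y = s(vert 0, vert s) := by
        intro y hy
        rw [hde] at hy
        rcases List.mem_cons.mp hy with rfl | hy
        · exact Or.inr (Or.inr rfl)
        rcases List.mem_append.mp hy with hy | hy
        · rw [List.mem_reverse] at hy
          obtain ⟨i, hi, rfl⟩ := List.mem_map.mp hy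
          exact Or.inl (eMem (1+i))
        · rcases List.mem_cons.mp hy with rfl | hy
          · exact Or.inr (Or.inl rfl)
          · obtain ⟨i, hi, rfl⟩ := List.mem_map.mp hy
            exact Or.inl (eMem (u+i))
      obtain ⟨ψ, hψi, hψm⟩ := mkψ _ d _ _ hchar
        ((SimpleGraph.mem_edgeSet _).mpr hadjB) ((SimpleGraph.mem_edgeSet _).mpr hadjA)
      exact hnoℓ ⟨vert 0, d, hdc, hlen', ψ, hψi, hψm⟩
    · -- the cycle  v0, v1, v_u, ..., v_s, v0
      have hueq : u = s - (ℓ - 3) := hfb2 (by omega)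
      have hus : u + (ℓ - 3) = s := by omega
      obtain ⟨d, hdc, hdl, hde⟩ := cycleWin3 vert P u (ℓ-3) hne1 vne2
        (by omega) (by omega) (by omega)
      have hlen' : d.length = ℓ := by rw [hdl]; omega
      have hchar : ∀ y ∈ d.edges,
          y ∈ c.edges ∨ y = s(vert 1, vert u) ∨ y = s(vert (u+(ℓ-3)), vert 0) := by
        intro y hy
        rw [hde] at hy
        rcases List.mem_cons.mp hy with rfl | hy
        · exact Or.inl (eMem 0)
        rcases List.mem_cons.mp hy with rfl | hy
        · exact Or.inr (Or.inl rfl)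
        rcases List.mem_append.mp hy with hy | hy
        · obtain ⟨i, hi, rfl⟩ := List.mem_map.mp hy
          exact Or.inl (eMem (u+i))
        · rw [List.mem_singleton] at hy
          exact Or.inr (Or.inr hy)
      have hadjA' : (G A).Adj (vert (u+(ℓ-3))) (vert 0) := by
        rw [hus]; exact hadjA.symm
      obtain ⟨ψ, hψi, hψm⟩ := mkψ _ d _ _ hchar
        ((SimpleGraph.mem_edgeSet _).mpr hadjB) ((SimpleGraph.mem_edgeSet _).mpr hadjA')
      exact hnoℓ ⟨vert 0, d, hdc, hlen', ψ, hψi, hψm⟩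
end
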